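/- Every model of ZFU_R that satisfies every instance of the DC_ω-scheme and every instance of the Collection scheme also satisfies every instance of the reflection scheme RP. -/

import Mathlib

set_option linter.unusedVariables false
namespace Urelements

/-- First-order formulas of the language of urelement set theory, with a binary
relation `∈` (`mem`), equality, and a unary predicate `𝒜` (`ur`), using de Bruijn
variables `Fin n`. -/
inductive Fml : ℕ → Type
  | mem {n : ℕ} : Fin n → Fin n → Fml n
  | eq  {n : ℕ} : Fin n → Fin n → Fml n
  | ur  {n : ℕ} : Fin n → Fml n
  | not {n : ℕ} : Fml n → Fml n
  | and {n : ℕ} : Fml n → Fml n → Fml n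
  | ex  {n : ℕ} : Fml (n + 1) → Fml n

/-- Tarskian satisfaction of a formula in the structure `(M, E, A)`. -/
def Realize {M : Type} (E : M → M → Prop) (A : M → Prop) :
    ∀ {n : ℕ}, Fml n → (Fin n → M) → Prop
  | _, .mem i j, v => E (v i) (v j)
  | _, .eq i j, v => v i = v j
  | _, .ur i, v => A (v i)
  | _, .not φ, v => ¬ Realize E A φ v
  | _, .and φ ψ, v => Realize E A φ v ∧ Realize E A ψ v
  | _, .ex φ, v => ∃ x, Realize E A φ (Fin.snoc v x)

/-- Satisfaction of `φ` relativized to the members of `t`: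
all quantifiers range over `{x | E x t}`. -/
def RealizeIn {M : Type} (E : M → M → Prop) (A : M → Prop) (t : M) :
    ∀ {n : ℕ}, Fml n → (Fin n → M) → Prop
  | _, .mem i j, v => E (v i) (v j)
  | _, .eq i j, v => v i = v j
  | _, .ur i, v => A (v i)
  | _, .not φ, v => ¬ RealizeIn E A t φ v
  | _, .and φ ψ, v => RealizeIn E A t φ v ∧ RealizeIn E A t ψ v
  | _, .ex φ, v => ∃ x, E x t ∧ RealizeIn E A t φ (Fin.snoc v x)

/- ### The axioms of urelement set theory -/

/-- Axiom 𝒜: urelements have no members. -/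
def AxiomA {M : Type} (E : M → M → Prop) (A : M → Prop) : Prop :=
  ∀ x, A x → ∀ y, ¬ E y x

/-- Extensionality for sets. -/
def Extensionality {M : Type} (E : M → M → Prop) (A : M → Prop) : Prop :=
  ∀ x y, ¬ A x → ¬ A y → (∀ z, E z x ↔ E z y) → x = y

def Foundation {M : Type} (E : M → M → Prop) (A : M → Prop) : Prop :=
  ∀ x, (∃ y, E y x) → ∃ z, E z x ∧ ∀ w, E w z → ¬ E w x

def Pairing {M : Type} (E : M → M → Prop) (A : M → Prop) : Prop :=
  ∀ x y, ∃ z, ∀ v, E v z ↔ (v = x ∨ v = y)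

def UnionAx {M : Type} (E : M → M → Prop) (A : M → Prop) : Prop :=
  ∀ x, ∃ y, ∀ z, E z y ↔ ∃ w, E w x ∧ E z w

def PowersetAx {M : Type} (E : M → M → Prop) (A : M → Prop) : Prop :=
  ∀ x, ∃ y, ∀ z, E z y ↔ (¬ A z ∧ ∀ w, E w z → E w x)

def InfinityAx {M : Type} (E : M → M → Prop) (A : M → Prop) : Prop :=
  ∃ s, (∃ y, E y s ∧ ¬ A y ∧ ∀ z, ¬ E z y) ∧
    ∀ x, E x s → ∃ u, E u s ∧ ∀ v, E v u ↔ (E v x ∨ v = x)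

/-- The Separation scheme: for every first-order formula `φ(z, u₁, …, uₙ)`. -/
def SeparationScheme {M : Type} (E : M → M → Prop) (A : M → Prop) : Prop :=
  ∀ (n : ℕ) (φ : Fml (n + 1)) (p : Fin n → M) (x : M),
    ∃ y, ∀ z, E z y ↔ (E z x ∧ Realize E A φ (Fin.snoc p z))

/-- The Replacement scheme. -/
def ReplacementScheme {M : Type} (E : M → M → Prop) (A : M → Prop) : Prop :=
  ∀ (n : ℕ) (φ : Fml (n + 2)) (p : Fin n → M) (w : M),
    (∀ x, E x w → ∃! y, Realize E A φ (Fin.snoc (Fin.snoc p x) y)) →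
    ∃ v, ∀ x, E x w → ∃ y, E y v ∧ Realize E A φ (Fin.snoc (Fin.snoc p x) y)

/-- The Collection scheme. -/
def CollectionScheme {M : Type} (E : M → M → Prop) (A : M → Prop) : Prop :=
  ∀ (n : ℕ) (φ : Fml (n + 2)) (p : Fin n → M) (w : M),
    (∀ x, E x w → ∃ y, Realize E A φ (Fin.snoc (Fin.snoc p x) y)) →
    ∃ v, ∀ x, E x w → ∃ y, E y v ∧ Realize E A φ (Fin.snoc (Fin.snoc p x) y)

/-- The theory ZU. -/
def ZU {M : Type} (E : M → M → Prop) (A : M → Prop) : Prop :=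
  AxiomA E A ∧ Extensionality E A ∧ Foundation E A ∧ Pairing E A ∧ UnionAx E A ∧
    PowersetAx E A ∧ InfinityAx E A ∧ SeparationScheme E A

/-- ZFU_R = ZU + Replacement. -/
def ZFUR {M : Type} (E : M → M → Prop) (A : M → Prop) : Prop :=
  ZU E A ∧ ReplacementScheme E A

/- ### Internal set-theoretic notions -/

/-- `t` is a transitive set. -/
def TransSet {M : Type} (E : M → M → Prop) (A : M → Prop) (t : M) : Prop :=
  ¬ A t ∧ ∀ y, E y t → ∀ z, E z y → E z t

/-- The reflection scheme RP: for every formula `φ` and every set `x` there is a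
transitive set `t ⊇ x` reflecting `φ`. -/
def RPScheme {M : Type} (E : M → M → Prop) (A : M → Prop) : Prop :=
  ∀ (n : ℕ) (φ : Fml n) (x : M),
    ∃ t, TransSet E A t ∧ (∀ z, E z x → E z t) ∧
      ∀ v : Fin n → M, (∀ i, E (v i) t) →
        (Realize E A φ v ↔ RealizeIn E A t φ v)

/-- The weak reflection scheme RP⁻. -/
def RPMinusScheme {M : Type} (E : M → M → Prop) (A : M → Prop) : Prop :=
  ∀ (n : ℕ) (φ : Fml n) (v : Fin n → M),
    Realize E A φ v →
      ∃ t, TransSet E A t ∧ (∀ i, E (v i) t) ∧ RealizeIn E A t φ v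

/-- `b` is a set of urelements. -/
def IsSetOfUrelements {M : Type} (E : M → M → Prop) (A : M → Prop) (b : M) : Prop :=
  ¬ A b ∧ ∀ x, E x b → A x

/-- `b` and `c` are disjoint. -/
def DisjointM {M : Type} (E : M → M → Prop) (A : M → Prop) (b c : M) : Prop :=
  ∀ z, E z b → ¬ E z c

/-- `p` is the Kuratowski ordered pair `⟨x, y⟩`. -/
def IsKPair {M : Type} (E : M → M → Prop) (A : M → Prop) (x y p : M) : Prop :=
  ¬ A p ∧ ∀ w, E w p ↔
    (¬ A w ∧ ((∀ v, E v w ↔ v = x) ∨ (∀ v, E v w ↔ (v = x ∨ v = y))))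

/-- `y` is a value of the (set-)function `f` at `x`. -/
def FVal {M : Type} (E : M → M → Prop) (A : M → Prop) (f x y : M) : Prop :=
  ∃ p, E p f ∧ IsKPair E A x y p

/-- `f` is a function with domain `d`. -/
def IsFuncOn {M : Type} (E : M → M → Prop) (A : M → Prop) (f d : M) : Prop :=
  ¬ A f ∧ (∀ p, E p f → ∃ x y, E x d ∧ IsKPair E A x y p) ∧
    (∀ x, E x d → ∃ y, FVal E A f x y) ∧
    (∀ x y y', FVal E A f x y → FVal E A f x y' → y = y')

/-- `f` is an injection from `b` into `c`. -/
def IsInjection {M : Type} (E : M → M → Prop) (A : M → Prop) (f b c : M) : Prop :=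
  IsFuncOn E A f b ∧ (∀ x y, FVal E A f x y → E y c) ∧
    (∀ x x' y, FVal E A f x y → FVal E A f x' y → x = x')

/-- `f` is a bijection from `b` onto `c`. -/
def IsBijection {M : Type} (E : M → M → Prop) (A : M → Prop) (f b c : M) : Prop :=
  IsInjection E A f b c ∧ ∀ y, E y c → ∃ x, E x b ∧ FVal E A f x y

/-- `b` and `c` are equinumerous (by an internal bijection). -/
def Equinumerous {M : Type} (E : M → M → Prop) (A : M → Prop) (b c : M) : Prop :=
  ∃ f, IsBijection E A f b c

/-- `u` is related to `v` by the set-relation `r` (a set of ordered pairs). -/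
def RelOf {M : Type} (E : M → M → Prop) (A : M → Prop) (r u v : M) : Prop :=
  ∃ p, E p r ∧ IsKPair E A u v p

/-- `r` is a well-ordering of `x`. -/
def IsWellOrderOn {M : Type} (E : M → M → Prop) (A : M → Prop) (r x : M) : Prop :=
  (∀ u v, RelOf E A r u v → (E u x ∧ E v x)) ∧
    (∀ u, E u x → ¬ RelOf E A r u u) ∧
    (∀ u v w, RelOf E A r u v → RelOf E A r v w → RelOf E A r u w) ∧
    (∀ u v, E u x → E v x → u ≠ v → (RelOf E A r u v ∨ RelOf E A r v u)) ∧
    (∀ s, ¬ A s → (∀ z, E z s → E z x) → (∃ z, E z s) →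
      ∃ m, E m s ∧ ∀ z, E z s → ¬ RelOf E A r z m)

def WellOrderable {M : Type} (E : M → M → Prop) (A : M → Prop) (x : M) : Prop :=
  ∃ r, ¬ A r ∧ IsWellOrderOn E A r x

/-- AC: every set is well-orderable. -/
def AxChoice {M : Type} (E : M → M → Prop) (A : M → Prop) : Prop :=
  ∀ x, ¬ A x → WellOrderable E A x

/-- ZFCU_R = ZFU_R + AC. -/
def ZFCUR {M : Type} (E : M → M → Prop) (A : M → Prop) : Prop :=
  ZFUR E A ∧ AxChoice E A

/-- AC_𝒜: every set of urelements is well-orderable. -/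
def ACA {M : Type} (E : M → M → Prop) (A : M → Prop) : Prop :=
  ∀ b, IsSetOfUrelements E A b → WellOrderable E A b

/-- `o` is a (von Neumann) ordinal: a transitive pure set well-ordered by `∈`. -/
def IsOrdinal {M : Type} (E : M → M → Prop) (A : M → Prop) (o : M) : Prop :=
  TransSet E A o ∧ (∀ x, E x o → TransSet E A x) ∧
    (∀ x y, E x o → E y o → (E x y ∨ x = y ∨ E y x))

/-- `k` is a cardinal: an ordinal not equinumerous with any of its members. -/
def IsCardinal {M : Type} (E : M → M → Prop) (A : M → Prop) (k : M) : Prop :=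
  IsOrdinal E A k ∧ ∀ o, E o k → ¬ Equinumerous E A o k

def IsLimitOrdinal {M : Type} (E : M → M → Prop) (A : M → Prop) (o : M) : Prop :=
  IsOrdinal E A o ∧ (∃ x, E x o) ∧ ∀ x, E x o → ∃ y, E y o ∧ E x y

/-- `k` is an infinite cardinal (a cardinal with a nonzero limit ordinal ≤ it). -/
def IsInfiniteCardinal {M : Type} (E : M → M → Prop) (A : M → Prop) (k : M) : Prop :=
  IsCardinal E A k ∧ ∃ b, (E b k ∨ b = k) ∧ IsLimitOrdinal E A b

/-- `o` is ω, the least nonzero limit ordinal. -/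
def IsOmega {M : Type} (E : M → M → Prop) (A : M → Prop) (o : M) : Prop :=
  IsLimitOrdinal E A o ∧ ∀ x, E x o → ¬ IsLimitOrdinal E A x

/-- The cardinal `k` is realized: some set of urelements is equinumerous with it. -/
def Realized {M : Type} (E : M → M → Prop) (A : M → Prop) (k : M) : Prop :=
  ∃ b, IsSetOfUrelements E A b ∧ Equinumerous E A b k

/-- Plenitude: every cardinal is realized. -/
def Plenitude {M : Type} (E : M → M → Prop) (A : M → Prop) : Prop :=
  ∀ k, IsCardinal E A k → Realized E A k

/-- Plenitude⁺: every set is equinumerous with some set of urelements. -/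
def PlenitudePlus {M : Type} (E : M → M → Prop) (A : M → Prop) : Prop :=
  ∀ x, ¬ A x → ∃ b, IsSetOfUrelements E A b ∧ Equinumerous E A x b

/-- `o` is the supremum (least upper bound in the ordinals) of the set `s`. -/
def IsSupremumOf {M : Type} (E : M → M → Prop) (A : M → Prop) (s o : M) : Prop :=
  IsOrdinal E A o ∧ (∀ k, E k s → (E k o ∨ k = o)) ∧
    ∀ o', IsOrdinal E A o' → (∀ k, E k s → (E k o' ∨ k = o')) → (E o o' ∨ o = o')

/-- Closure: the supremum of a set of realized cardinals is realized. -/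
def ClosureAx {M : Type} (E : M → M → Prop) (A : M → Prop) : Prop :=
  ∀ s, ¬ A s → (∀ k, E k s → IsCardinal E A k ∧ Realized E A k) →
    ∀ o, IsSupremumOf E A s o → Realized E A o

/-- `b` has a duplicate: a disjoint equinumerous set of urelements. -/
def HasDuplicate {M : Type} (E : M → M → Prop) (A : M → Prop) (b : M) : Prop :=
  ∃ c, IsSetOfUrelements E A c ∧ DisjointM E A b c ∧ Equinumerous E A b c

/-- Duplication: every set of urelements has a duplicate. -/
def Duplication {M : Type} (E : M → M → Prop) (A : M → Prop) : Prop :=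
  ∀ b, IsSetOfUrelements E A b → HasDuplicate E A b

/-- Duplication holds over `a`: every set of urelements disjoint from `a` has a
duplicate disjoint from `a`. -/
def DuplicationOver {M : Type} (E : M → M → Prop) (A : M → Prop) (a : M) : Prop :=
  ∀ b, IsSetOfUrelements E A b → DisjointM E A b a →
    ∃ c, IsSetOfUrelements E A c ∧ DisjointM E A c b ∧ DisjointM E A c a ∧
      Equinumerous E A b c

/-- `π` is an automorphism of the universe. -/
def IsAutomorphism {M : Type} (E : M → M → Prop) (A : M → Prop) (π : M ≃ M) : Prop :=
  (∀ x y, E (π x) (π y) ↔ E x y) ∧ (∀ x, A (π x) ↔ A x)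

/-- Homogeneity holds over `a`. -/
def HomogeneityOver {M : Type} (E : M → M → Prop) (A : M → Prop) (a : M) : Prop :=
  ∀ b c, IsSetOfUrelements E A b → IsSetOfUrelements E A c → Equinumerous E A b c →
    DisjointM E A b a → DisjointM E A c a →
    ∃ π : M ≃ M, IsAutomorphism E A π ∧ π b = c ∧ ∀ x, E x a → π x = x

/-- `t` is a tail of `a`. -/
def IsTailOf {M : Type} (E : M → M → Prop) (A : M → Prop) (t a : M) : Prop :=
  IsSetOfUrelements E A t ∧ DisjointM E A t a ∧
    ∀ c, IsSetOfUrelements E A c → DisjointM E A c a → ∃ f, IsInjection E A f c t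

/-- Tail: every set of urelements has a tail. -/
def TailAx {M : Type} (E : M → M → Prop) (A : M → Prop) : Prop :=
  ∀ a, IsSetOfUrelements E A a → ∃ t, IsTailOf E A t a

/-- Tail⁺: every set of urelements has a well-orderable tail. -/
def TailPlus {M : Type} (E : M → M → Prop) (A : M → Prop) : Prop :=
  ∀ a, IsSetOfUrelements E A a → ∃ t, IsTailOf E A t a ∧ WellOrderable E A t

/-- `s` is the restriction `f ↾ a`. -/
def IsRestrictionOf {M : Type} (E : M → M → Prop) (A : M → Prop) (f a s : M) : Prop :=
  ¬ A s ∧ ∀ p, E p s ↔ (E p f ∧ ∃ x y, IsKPair E A x y p ∧ E x a)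

/-- The DC_κ-scheme at the cardinal `k` of the model. -/
def DCSchemeAt {M : Type} (E : M → M → Prop) (A : M → Prop) (k : M) : Prop :=
  ∀ (n : ℕ) (φ : Fml (n + 2)) (p : Fin n → M),
    (∀ x, ∃ y, Realize E A φ (Fin.snoc (Fin.snoc p x) y)) →
    ∃ f, IsFuncOn E A f k ∧ ∀ a, E a k →
      ∃ s t, IsRestrictionOf E A f a s ∧ FVal E A f a t ∧
        Realize E A φ (Fin.snoc (Fin.snoc p s) t)

/-- The DC_ω-scheme. -/
def DComegaScheme {M : Type} (E : M → M → Prop) (A : M → Prop) : Prop :=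
  ∀ o, IsOmega E A o → DCSchemeAt E A o

/-- DC_{<Ord}: the DC_κ-scheme for every infinite cardinal κ. -/
def DCltOrd {M : Type} (E : M → M → Prop) (A : M → Prop) : Prop :=
  ∀ k, IsInfiniteCardinal E A k → DCSchemeAt E A k

/- ### Restriction to a subclass (for inner models) -/

def restrictE {M : Type} (E : M → M → Prop) (D : M → Prop) :
    {x : M // D x} → {x : M // D x} → Prop := fun a b => E a.1 b.1

def restrictA {M : Type} (A : M → Prop) (D : M → Prop) :
    {x : M // D x} → Prop := fun a => A a.1

/-- `t` is the transitive closure of `{x}` (the least transitive set with `x` as member). -/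
def IsTransClosOfSing {M : Type} (E : M → M → Prop) (A : M → Prop) (x t : M) : Prop :=
  TransSet E A t ∧ E x t ∧
    ∀ t', TransSet E A t' → E x t' → ∀ z, E z t → E z t'

/-- `kx` is the kernel of `x`: the set of urelements in the transitive closure of `{x}`. -/
def IsKernelOf {M : Type} (E : M → M → Prop) (A : M → Prop) (x kx : M) : Prop :=
  ¬ A kx ∧ ∃ t, IsTransClosOfSing E A x t ∧ ∀ a, E a kx ↔ (A a ∧ E a t)



/- ############################################################ -/
/- ### Auxiliary development for the proof ### -/

section Toolkit

namespace Fml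

/-- Renaming of variables. -/
def rename : {n m : ℕ} → (Fin n → Fin m) → Fml n → Fml m
  | _, _, f, .mem i j => .mem (f i) (f j)
  | _, _, f, .eq i j => .eq (f i) (f j)
  | _, _, f, .ur i => .ur (f i)
  | _, _, f, .not φ => .not (rename f φ)
  | _, _, f, .and φ ψ => .and (rename f φ) (rename f ψ)
  | _, _, f, .ex φ =>
      .ex (rename (fun i => Fin.lastCases (Fin.last _) (fun j => (f j).castSucc) i) φ)

def imp {n : ℕ} (φ ψ : Fml n) : Fml n := .not (.and φ (.not ψ))
def or {n : ℕ} (φ ψ : Fml n) : Fml n := .not (.and (.not φ) (.not ψ))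
def iff {n : ℕ} (φ ψ : Fml n) : Fml n := .and (imp φ ψ) (imp ψ φ)
def all {n : ℕ} (φ : Fml (n+1)) : Fml n := .not (.ex (.not φ))
def trueF {n : ℕ} : Fml n := .not (.ex (.not (.eq (Fin.last n) (Fin.last n))))

/-- Block of `m` universal quantifiers. -/
def alls : (m : ℕ) → {n : ℕ} → Fml (n + m) → Fml n
  | 0, _, φ => φ
  | m+1, _, φ => alls m (all φ)

def conj {n : ℕ} : List (Fml n) → Fml n
  | [] => trueF
  | f :: L => .and f (conj L)

end Fml

variable {M : Type} {E : M → M → Prop} {A : M → Prop}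

@[simp] lemma realize_imp {n} (φ ψ : Fml n) (v : Fin n → M) :
    Realize E A (φ.imp ψ) v ↔ (Realize E A φ v → Realize E A ψ v) := by
  simp only [Fml.imp, Realize]; tauto

@[simp] lemma realize_or {n} (φ ψ : Fml n) (v : Fin n → M) :
    Realize E A (φ.or ψ) v ↔ (Realize E A φ v ∨ Realize E A ψ v) := by
  simp [Fml.or, Realize]; tauto

@[simp] lemma realize_iff {n} (φ ψ : Fml n) (v : Fin n → M) :
    Realize E A (φ.iff ψ) v ↔ (Realize E A φ v ↔ Realize E A ψ v) := by
  simp only [Fml.iff, Realize, realize_imp]; tauto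

@[simp] lemma realize_all {n} (φ : Fml (n+1)) (v : Fin n → M) :
    Realize E A φ.all v ↔ ∀ x : M, Realize E A φ (Fin.snoc v x) := by
  simp [Fml.all, Realize]

@[simp] lemma realize_trueF {n} (v : Fin n → M) : Realize E A Fml.trueF v := by
  simp [Fml.trueF, Realize]

@[simp] lemma realize_conj {n} (L : List (Fml n)) (v : Fin n → M) :
    Realize E A (Fml.conj L) v ↔ ∀ f ∈ L, Realize E A f v := by
  induction L with
  | nil => simp [Fml.conj]
  | cons f L ih => simp [Fml.conj, Realize, ih]

attribute [irreducible] Fml.imp Fml.or Fml.iff Fml.all Fml.trueF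

@[simp] lemma realize_mem {n} (i j : Fin n) (v : Fin n → M) :
    Realize E A (.mem i j) v ↔ E (v i) (v j) := Iff.rfl
@[simp] lemma realize_eq {n} (i j : Fin n) (v : Fin n → M) :
    Realize E A (.eq i j) v ↔ v i = v j := Iff.rfl
@[simp] lemma realize_ur {n} (i : Fin n) (v : Fin n → M) :
    Realize E A (.ur i) v ↔ A (v i) := Iff.rfl
@[simp] lemma realize_not {n} (φ : Fml n) (v : Fin n → M) :
    Realize E A (.not φ) v ↔ ¬ Realize E A φ v := Iff.rfl
@[simp] lemma realize_and {n} (φ ψ : Fml n) (v : Fin n → M) :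
    Realize E A (.and φ ψ) v ↔ (Realize E A φ v ∧ Realize E A ψ v) := Iff.rfl
@[simp] lemma realize_ex {n} (φ : Fml (n+1)) (v : Fin n → M) :
    Realize E A (.ex φ) v ↔ ∃ x, Realize E A φ (Fin.snoc v x) := Iff.rfl

lemma snoc_comp_ext {n m} (f : Fin n → Fin m) (v : Fin m → M) (x : M) :
    (Fin.snoc v x : Fin (m+1) → M) ∘
      (fun i => Fin.lastCases (Fin.last m) (fun j => (f j).castSucc) i)
      = Fin.snoc (v ∘ f) x := by
  funext i
  induction i using Fin.lastCases with
  | last => simp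
  | cast j => simp

lemma realize_rename {n} (φ : Fml n) : ∀ {m} (f : Fin n → Fin m) (v : Fin m → M),
    Realize E A (Fml.rename f φ) v ↔ Realize E A φ (v ∘ f) := by
  induction φ with
  | mem i j => intro m f v; exact Iff.rfl
  | eq i j => intro m f v; exact Iff.rfl
  | ur i => intro m f v; exact Iff.rfl
  | not φ ih => intro m f v; simp [Fml.rename, Realize, ih]
  | and φ ψ ih₁ ih₂ => intro m f v; simp [Fml.rename, Realize, ih₁, ih₂]
  | ex φ ih =>
      intro m f v
      simp only [Fml.rename, Realize, ih]
      exact exists_congr fun x => by rw [snoc_comp_ext]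

/-- Evaluate `Fin.snoc` at an explicit index. -/
lemma snocE {n} (v : Fin n → M) (x : M) (i : Fin (n+1)) :
    (Fin.snoc v x : Fin (n+1) → M) i = if h : (i : ℕ) < n then v ⟨i, h⟩ else x := by
  by_cases h : (i : ℕ) < n
  · rw [dif_pos h]
    have hi : i = Fin.castSucc ⟨i, h⟩ := by ext; rfl
    conv_lhs => rw [hi]
    rw [Fin.snoc_castSucc]
  · rw [dif_neg h]
    have hi : i = Fin.last n := by ext; simp; omega
    conv_lhs => rw [hi]
    rw [Fin.snoc_last]

/-- Append of valuations, peeling from the right. -/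
def apnd {n : ℕ} (v : Fin n → M) : {m : ℕ} → (Fin m → M) → Fin (n + m) → M
  | 0, _ => v
  | _+1, w => Fin.snoc (apnd v (w ∘ Fin.castSucc)) (w (Fin.last _))

lemma apnd_lt {n} (v : Fin n → M) : ∀ {m} (w : Fin m → M) (i : ℕ) (h : i < n)
    (h' : i < n + m), apnd v w ⟨i, h'⟩ = v ⟨i, h⟩ := by
  intro m
  induction m with
  | zero => intro w i h h'; rfl
  | succ m ih =>
      intro w i h h'
      show Fin.snoc _ _ _ = _
      rw [show (⟨i, h'⟩ : Fin (n + m + 1)) = Fin.castSucc ⟨i, (by omega : i < n + m)⟩ from by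
        ext; rfl, Fin.snoc_castSucc]
      exact ih _ i h _

lemma apnd_ge {n} (v : Fin n → M) : ∀ {m} (w : Fin m → M) (i : ℕ) (h : n ≤ i)
    (h' : i < n + m) (h'' : i - n < m), apnd v w ⟨i, h'⟩ = w ⟨i - n, h''⟩ := by
  intro m
  induction m with
  | zero => intro w i h h' h''; omega
  | succ m ih =>
      intro w i h h' h''
      show Fin.snoc _ _ _ = _
      by_cases hc : i < n + m
      · rw [show (⟨i, h'⟩ : Fin (n + m + 1)) = Fin.castSucc ⟨i, hc⟩ from by ext; rfl,
          Fin.snoc_castSucc, ih (w ∘ Fin.castSucc) i h hc (by omega)]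
        rfl
      · have hi : (⟨i, h'⟩ : Fin (n + m + 1)) = Fin.last (n + m) := by
          ext; simp only [Fin.val_last]; omega
        rw [hi]
        have him : i - n = m := by omega
        have hl : (⟨i - n, h''⟩ : Fin (m + 1)) = Fin.last m := by
          ext; simp only [Fin.val_last]; omega
        rw [hl]
        exact Fin.snoc_last _ _

lemma realize_alls {m : ℕ} : ∀ {n : ℕ} (φ : Fml (n + m)) (v : Fin n → M),
    Realize E A (Fml.alls m φ) v ↔ ∀ w : Fin m → M, Realize E A φ (apnd v w) := by
  induction m with
  | zero =>
      intro n φ v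
      constructor
      · intro h w; exact h
      · intro h; exact h (fun i => i.elim0)
  | succ m ih =>
      intro n φ v
      show Realize E A (Fml.alls m φ.all) v ↔ _
      rw [ih]
      constructor
      · intro h w
        have := (realize_all _ _).mp (h (w ∘ Fin.castSucc)) (w (Fin.last m))
        exact this
      · intro h w
        rw [realize_all]
        intro x
        have hx := h (Fin.snoc w x)
        have hcomp : (Fin.snoc w x : Fin (m+1) → M) ∘ Fin.castSucc = w := by
          funext j; simp
        have heq : apnd v (Fin.snoc w x) = Fin.snoc (apnd v w) x := by
          have h0 : apnd v (Fin.snoc w x)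
              = Fin.snoc (apnd v ((Fin.snoc w x : Fin (m+1) → M) ∘ Fin.castSucc))
                ((Fin.snoc w x : Fin (m+1) → M) (Fin.last m)) := rfl
          rw [h0, hcomp, Fin.snoc_last]
        rw [heq] at hx
        exact hx

end Toolkit


section Model

variable {M : Type} {E : M → M → Prop} {A : M → Prop}

/-- A variable with bound discharged by `omega`. -/
def fv {n : ℕ} (k : ℕ) (h : k < n := by omega) : Fin n := ⟨k, h⟩

@[simp] lemma fv_val {n} (k : ℕ) (h : k < n) : ((fv k h : Fin n) : ℕ) = k := rfl

/- ### Basic set existence lemmas -/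

lemma notA_of_mem (hA : AxiomA E A) {x y : M} (h : E y x) : ¬ A x :=
  fun hAx => hA x hAx y h

lemma empty_exists (hInf : InfinityAx E A) : ∃ e : M, ¬ A e ∧ ∀ z, ¬ E z e := by
  obtain ⟨s, ⟨y, _, hy, hy2⟩, -⟩ := hInf
  exact ⟨y, hy, hy2⟩

lemma sing_exists (hA : AxiomA E A) (hPair : Pairing E A) (x : M) :
    ∃ z, ¬ A z ∧ ∀ v, E v z ↔ v = x := by
  obtain ⟨z, hz⟩ := hPair x x
  refine ⟨z, notA_of_mem hA ((hz x).mpr (Or.inl rfl)), fun v => ?_⟩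
  rw [hz]; tauto

lemma pair_exists (hA : AxiomA E A) (hPair : Pairing E A) (x y : M) :
    ∃ z, ¬ A z ∧ ∀ v, E v z ↔ (v = x ∨ v = y) := by
  obtain ⟨z, hz⟩ := hPair x y
  exact ⟨z, notA_of_mem hA ((hz x).mpr (Or.inl rfl)), hz⟩

lemma binUnion_exists (hPair : Pairing E A) (hUn : UnionAx E A) (a b : M) :
    ∃ c, ∀ z, E z c ↔ (E z a ∨ E z b) := by
  obtain ⟨p, hp⟩ := hPair a b
  obtain ⟨c, hc⟩ := hUn p
  refine ⟨c, fun z => ?_⟩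
  rw [hc]
  constructor
  · rintro ⟨w, hw1, hw2⟩
    rcases (hp w).mp hw1 with rfl | rfl
    · exact Or.inl hw2
    · exact Or.inr hw2
  · rintro (h | h)
    · exact ⟨a, (hp a).mpr (Or.inl rfl), h⟩
    · exact ⟨b, (hp b).mpr (Or.inr rfl), h⟩

lemma succ_exists (hA : AxiomA E A) (hPair : Pairing E A) (hUn : UnionAx E A) (x : M) :
    ∃ x', ¬ A x' ∧ ∀ v, E v x' ↔ (E v x ∨ v = x) := by
  obtain ⟨sx, _, hsx⟩ := sing_exists hA hPair x
  obtain ⟨c, hc⟩ := binUnion_exists hPair hUn x sx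
  have hx : E x c := (hc x).mpr (Or.inr ((hsx x).mpr rfl))
  refine ⟨c, notA_of_mem hA hx, fun v => ?_⟩
  rw [hc, hsx]

lemma no_self_mem (hA : AxiomA E A) (hFound : Foundation E A) (hPair : Pairing E A)
    (x : M) : ¬ E x x := by
  intro hxx
  obtain ⟨s, _, hs⟩ := sing_exists hA hPair x
  obtain ⟨z, hz1, hz2⟩ := hFound s ⟨x, (hs x).mpr rfl⟩
  rw [(hs z).mp hz1] at hz2
  exact hz2 x hxx ((hs x).mpr rfl)

lemma no_two_cycle (hA : AxiomA E A) (hFound : Foundation E A) (hPair : Pairing E A)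
    {x y : M} (h1 : E x y) (h2 : E y x) : False := by
  obtain ⟨s, _, hs⟩ := pair_exists hA hPair x y
  obtain ⟨z, hz1, hz2⟩ := hFound s ⟨x, (hs x).mpr (Or.inl rfl)⟩
  rcases (hs z).mp hz1 with rfl | rfl
  · exact hz2 y h2 ((hs y).mpr (Or.inr rfl))
  · exact hz2 x h1 ((hs x).mpr (Or.inl rfl))

/- ### Kuratowski pair basics -/

lemma kp_double (hA : AxiomA E A) (hPair : Pairing E A) {a u p : M}
    (h : IsKPair E A a u p) : ∃ d, E d p ∧ E a d ∧ E u d ∧ ∀ v, E v d ↔ (v = a ∨ v = u) := by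
  obtain ⟨d, hdA, hd⟩ := pair_exists hA hPair a u
  refine ⟨d, ?_, (hd a).mpr (Or.inl rfl), (hd u).mpr (Or.inr rfl), hd⟩
  exact (h.2 d).mpr ⟨hdA, Or.inr hd⟩

lemma kp_mem_cases {a u p d c : M} (h : IsKPair E A a u p) (hd : E d p) (hc : E c d) :
    c = a ∨ c = u := by
  rcases (h.2 d).mp hd with ⟨-, hsing | hdoub⟩
  · exact Or.inl ((hsing c).mp hc)
  · exact (hdoub c).mp hc

/- ### The inductive-set predicate and the construction of ω -/
def IndP (E : M → M → Prop) (A : M → Prop) (i : M) : Prop :=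
  (∃ y, E y i ∧ ¬ A y ∧ ∀ z, ¬ E z y) ∧
    ∀ x, E x i → ∃ u, E u i ∧ ∀ v, E v u ↔ (E v x ∨ v = x)

def IndF : Fml 1 :=
  .and (.ex (.and (.mem (fv 1) (fv 0))
    (.and (.not (.ur (fv 1))) (Fml.all (.not (.mem (fv 2) (fv 1)))))))
    (Fml.all (Fml.imp (.mem (fv 1) (fv 0)) (.ex (.and (.mem (fv 2) (fv 0))
      (Fml.all (Fml.iff (.mem (fv 3) (fv 2)) (Fml.or (.mem (fv 3) (fv 1)) (.eq (fv 3) (fv 1)))))))))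

lemma realize_IndF (v : Fin 1 → M) : Realize E A IndF v ↔ IndP E A (v 0) := by
  simp only [IndF, IndP, Realize, realize_all, realize_imp, realize_iff, realize_or, snocE,
    fv_val]
  simp


/-- `z'` is the successor `z ∪ {z}`. -/
def SuccCh (E : M → M → Prop) (z z' : M) : Prop := ∀ v, E v z' ↔ (E v z ∨ v = z)

/-- The formula `∀ i (Ind(i) → z ∈ i)` with `z` as variable 0. -/
def omegaDefF : Fml 1 :=
  Fml.all (Fml.imp (Fml.rename (fun _ => fv 1) IndF) (.mem (fv 0) (fv 1)))

lemma realize_omegaDefF (v : Fin 1 → M) :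
    Realize E A omegaDefF v ↔ ∀ i, IndP E A i → E (v 0) i := by
  simp only [fv, omegaDefF, realize_all, realize_imp, realize_rename, realize_IndF,
    realize_mem, snocE, fv_val, Function.comp]
  norm_num [fv]

@[simp] lemma snoc_fv_eq {n} (p : Fin n → M) (z : M) :
    (Fin.snoc p z : Fin (n+1) → M) (fv n) = z := by
  rw [snocE]; simp

@[simp] lemma snoc_fv_lt {n} (p : Fin n → M) (z : M) (k : ℕ) (h : k < n) (h2 : k < n + 1) :
    (Fin.snoc p z : Fin (n+1) → M) (fv k h2) = p (fv k h) := by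
  rw [snocE, dif_pos (show ((fv k h2 : Fin (n+1)) : ℕ) < n from h)]; rfl

/- induction-instance formulas -/
def psi1 : Fml 2 := Fml.all (Fml.imp (.mem (fv 2) (fv 1)) (.mem (fv 2) (fv 0)))

lemma realize_psi1 (v : Fin 2 → M) :
    Realize E A psi1 v ↔ ∀ y, E y (v (fv 1)) → E y (v (fv 0)) := by
  simp only [fv, psi1, realize_all, realize_imp, Realize, snocE, fv_val]
  norm_num

def psi2 : Fml 1 := .and (.not (.ur (fv 0)))
  (Fml.all (Fml.all (Fml.imp (.and (.mem (fv 1) (fv 0)) (.mem (fv 2) (fv 1)))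
    (.mem (fv 2) (fv 0)))))

lemma realize_psi2 (v : Fin 1 → M) :
    Realize E A psi2 v ↔ (¬ A (v (fv 0)) ∧
      ∀ y w, (E y (v (fv 0)) ∧ E w y) → E w (v (fv 0))) := by
  simp only [fv, psi2, realize_all, realize_imp, Realize, snocE, fv_val]
  norm_num

def psi3 : Fml 2 := Fml.or (.eq (fv 0) (fv 1)) (.mem (fv 0) (fv 1))

lemma realize_psi3 (v : Fin 2 → M) :
    Realize E A psi3 v ↔ (v (fv 0) = v (fv 1) ∨ E (v (fv 0)) (v (fv 1))) := by
  simp only [fv, psi3, realize_or, Realize, fv_val]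

/-- `∀ z (z ∈ n → ∀ w (SuccCh z w → (w ∈ n ∨ w = n)))`, `n` is variable 0. -/
def psiL2 : Fml 1 := Fml.all (Fml.imp (.mem (fv 1) (fv 0)) (Fml.all (Fml.imp
  (Fml.all (Fml.iff (.mem (fv 3) (fv 2)) (Fml.or (.mem (fv 3) (fv 1)) (.eq (fv 3) (fv 1)))))
  (Fml.or (.mem (fv 2) (fv 0)) (.eq (fv 2) (fv 0))))))

lemma realize_psiL2 (v : Fin 1 → M) :
    Realize E A psiL2 v ↔ ∀ z, E z (v (fv 0)) → ∀ w, SuccCh E z w →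
      (E w (v (fv 0)) ∨ w = v (fv 0)) := by
  simp only [fv, psiL2, SuccCh, realize_all, realize_imp, realize_iff, realize_or, Realize,
    snocE, fv_val]
  norm_num

/-- trichotomy below `o`: `∀ m (m ∈ o → (m ∈ z ∨ m = z ∨ z ∈ m))`; `o` var 0, `z` var 1. -/
def psiTri : Fml 2 := Fml.all (Fml.imp (.mem (fv 2) (fv 0))
  (Fml.or (.mem (fv 2) (fv 1)) (Fml.or (.eq (fv 2) (fv 1)) (.mem (fv 1) (fv 2)))))

lemma realize_psiTri (v : Fin 2 → M) :
    Realize E A psiTri v ↔ ∀ m, E m (v (fv 0)) →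
      (E m (v (fv 1)) ∨ m = v (fv 1) ∨ E (v (fv 1)) m) := by
  simp only [fv, psiTri, realize_all, realize_imp, realize_or, Realize, snocE, fv_val]
  norm_num

/-- `z = e ∨ ∃ y SuccCh y z`; `e` var 0, `z` var 1. -/
def psi5 : Fml 2 := Fml.or (.eq (fv 1) (fv 0)) (.ex
  (Fml.all (Fml.iff (.mem (fv 3) (fv 1)) (Fml.or (.mem (fv 3) (fv 2)) (.eq (fv 3) (fv 2))))))

lemma realize_psi5 (v : Fin 2 → M) :
    Realize E A psi5 v ↔ (v (fv 1) = v (fv 0) ∨ ∃ y, SuccCh E y (v (fv 1))) := by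
  simp only [fv, psi5, SuccCh, realize_or, realize_all, realize_iff, Realize, snocE, fv_val]
  norm_num

lemma omega_exists (hA : AxiomA E A) (hExt : Extensionality E A) (hFound : Foundation E A)
    (hPair : Pairing E A) (hUn : UnionAx E A) (hInf : InfinityAx E A)
    (hSep : SeparationScheme E A) : ∃ o, IsOmega E A o := by
  classical
  obtain ⟨e, heA, heE⟩ := empty_exists hInf
  obtain ⟨s0, hs0a, hs0b⟩ := hInf
  have hs0 : IndP E A s0 := ⟨hs0a, hs0b⟩
  -- any empty non-urelement equals e
  have hemp_eq : ∀ y, ¬ A y → (∀ z, ¬ E z y) → y = e := fun y h1 h2 =>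
    hExt y e h1 heA (fun z => by simp [h2 z, heE z])
  have he_mem_ind : ∀ i, IndP E A i → E e i := by
    rintro i ⟨⟨y, hyi, hyA, hyE⟩, -⟩
    rwa [hemp_eq y hyA hyE] at hyi
  -- the set ω
  obtain ⟨o, ho⟩ := hSep 0 omegaDefF (fun i => i.elim0) s0
  have hoMem : ∀ z, E z o ↔ (E z s0 ∧ ∀ i, IndP E A i → E z i) := by
    intro z
    rw [ho z, realize_omegaDefF]
    have h0 : (Fin.snoc (fun i => i.elim0) z : Fin 1 → M) 0 = z := by rw [snocE]; norm_num
    rw [h0]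
  have he_in : E e o := (hoMem e).mpr ⟨he_mem_ind s0 hs0, he_mem_ind⟩
  -- successors stay in every inductive set
  have hsucc_in_ind : ∀ i, IndP E A i → ∀ z z', E z i → SuccCh E z z' → E z' i := by
    intro i hi z z' hz hch
    obtain ⟨u, hui, hu⟩ := hi.2 z hz
    have : u = z' := by
      refine hExt u z' (notA_of_mem hA ((hu z).mpr (Or.inr rfl)))
        (notA_of_mem hA ((hch z).mpr (Or.inr rfl))) (fun w => ?_)
      rw [hu w, hch w]
    rwa [this] at hui
  have hsucc_in : ∀ z z', E z o → SuccCh E z z' → E z' o := by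
    intro z z' hz hch
    obtain ⟨hzs, hzall⟩ := (hoMem z).mp hz
    exact (hoMem z').mpr ⟨hsucc_in_ind s0 hs0 z z' hzs hch,
      fun i hi => hsucc_in_ind i hi z z' (hzall i hi) hch⟩
  -- the induction principle over o
  have oInd : ∀ (k : ℕ) (ψ : Fml (k+1)) (p : Fin k → M),
      Realize E A ψ (Fin.snoc p e) →
      (∀ z, E z o → Realize E A ψ (Fin.snoc p z) →
        ∀ z', SuccCh E z z' → Realize E A ψ (Fin.snoc p z')) →
      ∀ z, E z o → Realize E A ψ (Fin.snoc p z) := by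
    intro k ψ p hbase hstep z hz
    obtain ⟨B, hB⟩ := hSep k ψ p o
    have hBInd : IndP E A B := by
      constructor
      · exact ⟨e, (hB e).mpr ⟨he_in, hbase⟩, heA, heE⟩
      · intro x hx
        obtain ⟨hxo, hxψ⟩ := (hB x).mp hx
        obtain ⟨x', hx'A, hx'⟩ := succ_exists hA hPair hUn x
        have hch : SuccCh E x x' := hx'
        exact ⟨x', (hB x').mpr ⟨hsucc_in x x' hxo hch, hstep x hxo hxψ x' hch⟩, hx'⟩
    exact ((hB z).mp (((hoMem z).mp hz).2 B hBInd)).2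
  -- transitivity of o
  have htrans : ∀ z, E z o → ∀ y, E y z → E y o := by
    have := oInd 1 psi1 (fun _ => o) ?base ?step
    · intro z hz y hy
      have h2 := (realize_psi1 _).mp (this z hz) y
      simp (config := { decide := true }) only [snoc_fv_eq, snoc_fv_lt] at h2
      exact h2 hy
    case base =>
      rw [realize_psi1]
      simp (config := { decide := true }) only [snoc_fv_eq, snoc_fv_lt]
      exact fun y hy => absurd hy (heE y)
    case step =>
      intro z hz hzψ z' hch
      rw [realize_psi1] at hzψ ⊢
      simp (config := { decide := true }) only [snoc_fv_eq, snoc_fv_lt] at hzψ ⊢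
      intro y hy
      rcases (hch y).mp hy with h | rfl
      · exact hzψ y h
      · exact hz
  -- elements of o are transitive non-urelements
  have hmemtr : ∀ z, E z o → ¬ A z ∧ ∀ y w, E y z → E w y → E w z := by
    have := oInd 0 psi2 (fun i => i.elim0) ?base ?step
    · intro z hz
      have h2 := (realize_psi2 _).mp (this z hz)
      simp only [snoc_fv_eq] at h2
      exact ⟨h2.1, fun y w hy hw => h2.2 y w ⟨hy, hw⟩⟩
    case base =>
      rw [realize_psi2]
      simp only [snoc_fv_eq]
      exact ⟨heA, fun y w ⟨hy, _⟩ => absurd hy (heE y)⟩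
    case step =>
      intro z hz hzψ z' hch
      rw [realize_psi2] at hzψ ⊢
      simp only [snoc_fv_eq] at hzψ ⊢
      constructor
      · exact notA_of_mem hA ((hch z).mpr (Or.inr rfl))
      · rintro y w ⟨hy, hw⟩
        rcases (hch y).mp hy with h | rfl
        · exact (hch w).mpr (Or.inl (hzψ.2 y w ⟨h, hw⟩))
        · exact (hch w).mpr (Or.inl hw)
  -- e is comparable with everything in o
  have hzerocmp : ∀ z, E z o → (e = z ∨ E e z) := by
    have := oInd 1 psi3 (fun _ => e) ?base ?step
    · intro z hz
      have h2 := (realize_psi3 _).mp (this z hz)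
      simpa (config := { decide := true }) only [snoc_fv_eq, snoc_fv_lt] using h2
    case base =>
      rw [realize_psi3]; simp (config := { decide := true }) only [snoc_fv_eq, snoc_fv_lt]
      exact Or.inl trivial
    case step =>
      intro z hz hzψ z' hch
      rw [realize_psi3] at hzψ ⊢
      simp (config := { decide := true }) only [snoc_fv_eq, snoc_fv_lt] at hzψ ⊢
      refine Or.inr ?_
      rcases hzψ with h | h
      · exact (hch e).mpr (Or.inr h)
      · exact (hch e).mpr (Or.inl h)
  -- successor lemma
  have hL2 : ∀ n, E n o → ∀ z, E z n → ∀ w, SuccCh E z w → (E w n ∨ w = n) := by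
    have := oInd 0 psiL2 (fun i => i.elim0) ?base ?step
    · intro n hn
      have h2 := (realize_psiL2 _).mp (this n hn)
      simpa only [snoc_fv_eq] using h2
    case base =>
      rw [realize_psiL2]; simp only [snoc_fv_eq]
      exact fun z hz => absurd hz (heE z)
    case step =>
      intro n hn hψ z' hch
      rw [realize_psiL2] at hψ ⊢
      simp only [snoc_fv_eq] at hψ ⊢
      intro z hz w hw
      rcases (hch z).mp hz with h | rfl
      · rcases hψ z h w hw with h2 | rfl
        · exact Or.inl ((hch w).mpr (Or.inl h2))
        · exact Or.inl ((hch w).mpr (Or.inr rfl))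
      · refine Or.inr (hExt w z' (notA_of_mem hA ((hw z).mpr (Or.inr rfl)))
          (notA_of_mem hA ((hch z).mpr (Or.inr rfl))) (fun v => ?_))
        rw [hw v, hch v]
  -- trichotomy
  have htri : ∀ z, E z o → ∀ m, E m o → (E m z ∨ m = z ∨ E z m) := by
    have := oInd 1 psiTri (fun _ => o) ?base ?step
    · intro z hz m hm
      have h2 := (realize_psiTri _).mp (this z hz) m
      simp (config := { decide := true }) only [snoc_fv_eq, snoc_fv_lt] at h2
      exact h2 hm
    case base =>
      rw [realize_psiTri]; simp (config := { decide := true }) only [snoc_fv_eq, snoc_fv_lt]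
      intro m hm
      rcases hzerocmp m hm with rfl | h
      · exact Or.inr (Or.inl rfl)
      · exact Or.inr (Or.inr h)
    case step =>
      intro z hz hψ z' hch
      rw [realize_psiTri] at hψ ⊢
      simp (config := { decide := true }) only [snoc_fv_eq, snoc_fv_lt] at hψ ⊢
      intro m hm
      rcases hψ m hm with h | rfl | h
      · exact Or.inl ((hch m).mpr (Or.inl h))
      · exact Or.inl ((hch m).mpr (Or.inr rfl))
      · rcases hL2 m hm z h z' hch with h2 | rfl
        · exact Or.inr (Or.inr h2)
        · exact Or.inr (Or.inl rfl)
  -- every member of o is e or a successor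
  have hzs : ∀ z, E z o → (z = e ∨ ∃ y, SuccCh E y z) := by
    have := oInd 1 psi5 (fun _ => e) ?base ?step
    · intro z hz
      have h2 := (realize_psi5 _).mp (this z hz)
      simpa (config := { decide := true }) only [snoc_fv_eq, snoc_fv_lt] using h2
    case base =>
      rw [realize_psi5]; simp (config := { decide := true }) only [snoc_fv_eq, snoc_fv_lt]
      exact Or.inl trivial
    case step =>
      intro z hz hψ z' hch
      rw [realize_psi5] at hψ ⊢
      simp (config := { decide := true }) only [snoc_fv_eq, snoc_fv_lt] at hψ ⊢
      exact Or.inr ⟨z, hch⟩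
  -- assemble IsOmega
  have hOrd : IsOrdinal E A o := by
    refine ⟨⟨notA_of_mem hA he_in, htrans⟩, fun x hx => ?_, fun x y hx hy => ?_⟩
    · obtain ⟨h1, h2⟩ := hmemtr x hx
      exact ⟨h1, fun y hy z hz => h2 y z hy hz⟩
    · exact htri y hy x hx
  have hLim : IsLimitOrdinal E A o := by
    refine ⟨hOrd, ⟨e, he_in⟩, fun x hx => ?_⟩
    obtain ⟨x', _, hx'⟩ := succ_exists hA hPair hUn x
    exact ⟨x', hsucc_in x x' hx hx', (hx' x).mpr (Or.inr rfl)⟩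
  refine ⟨o, hLim, fun x hx hlx => ?_⟩
  obtain ⟨-, ⟨z0, hz0⟩, hxlim⟩ := hlx
  rcases hzs x hx with rfl | ⟨y, hy⟩
  · exact heE z0 hz0
  · have hyx : E y x := (hy y).mpr (Or.inr rfl)
    obtain ⟨w, hwx, hyw⟩ := hxlim y hyx
    rcases (hy w).mp hwx with h | rfl
    · exact no_two_cycle hA hFound hPair hyw h
    · exact no_self_mem hA hFound hPair w hyw


/- ### Kuratowski pair formula -/

/-- `IsKPair` as a formula; variables: `x` = 0, `y` = 1, `p` = 2. -/
def KPf : Fml 3 :=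
  .and (.not (.ur (fv 2)))
    (Fml.all
      (Fml.iff (.mem (fv 3) (fv 2))
        (.and (.not (.ur (fv 3)))
          (Fml.or
            (Fml.all (Fml.iff (.mem (fv 4) (fv 3)) (.eq (fv 4) (fv 0))))
            (Fml.all (Fml.iff (.mem (fv 4) (fv 3))
              (Fml.or (.eq (fv 4) (fv 0)) (.eq (fv 4) (fv 1)))))))))

lemma realize_KPf (v : Fin 3 → M) :
    Realize E A KPf v ↔ IsKPair E A (v (fv 0)) (v (fv 1)) (v (fv 2)) := by
  simp only [fv, KPf, IsKPair, realize_all, realize_iff, realize_or, realize_and,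
    realize_not, realize_ur, realize_mem, realize_eq, snocE, fv_val]
  norm_num

/- ### The source predicate -/

def Src (E : M → M → Prop) (A : M → Prop) (x o s z : M) : Prop :=
  E z x ∨ E z o ∨ ∃ p, E p s ∧ ∃ a u, IsKPair E A a u p ∧ E z u

/-- map sending KPf's variables `x y p` to `a u p` at positions 6 7 5 in context 8. -/
def kmap : Fin 3 → Fin 8 := fun i =>
  if i.val = 0 then fv 6 else if i.val = 1 then fv 7 else fv 5

/-- the source formula; variables: `x` 0, `o` 1, `s` 2, `t` 3 (unused), `z` 4. -/
def srcF : Fml 5 :=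
  Fml.or (.mem (fv 4) (fv 0)) (Fml.or (.mem (fv 4) (fv 1))
    (.ex (.and (.mem (fv 5) (fv 2))
      (.ex (.ex (.and (Fml.rename kmap KPf) (.mem (fv 4) (fv 7))))))))

lemma realize_srcF (v : Fin 5 → M) :
    Realize E A srcF v ↔ Src E A (v (fv 0)) (v (fv 1)) (v (fv 2)) (v (fv 4)) := by
  simp only [fv, srcF, Src, kmap, realize_or, realize_ex, realize_and, realize_mem,
    realize_rename, realize_KPf, snocE, fv_val, Function.comp]
  norm_num

/- ### Witness closure -/

def WitClS (E : M → M → Prop) (A : M → Prop) (S : M → Prop) (t : M) :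
    ∀ {k : ℕ}, Fml k → Prop
  | _, .not θ => WitClS E A S t θ
  | _, .and θ₁ θ₂ => WitClS E A S t θ₁ ∧ WitClS E A S t θ₂
  | _, .ex ψ => WitClS E A S t ψ ∧ ∀ w : Fin _ → M, (∀ i, S (w i)) →
      (∃ x, Realize E A ψ (Fin.snoc w x)) → ∃ x, E x t ∧ Realize E A ψ (Fin.snoc w x)
  | _, .mem _ _ => True
  | _, .eq _ _ => True
  | _, .ur _ => True

lemma witClS_mono : ∀ {k} (θ : Fml k) {S S' : M → Prop} {t t' : M},
    (∀ z, S' z → S z) → (∀ z, E z t → E z t') →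
    WitClS E A S t θ → WitClS E A S' t' θ := by
  intro k θ
  induction θ with
  | mem i j => intro S S' t t' _ _ _; trivial
  | eq i j => intro S S' t t' _ _ _; trivial
  | ur i => intro S S' t t' _ _ _; trivial
  | not θ ih => exact fun hS hT h => ih hS hT h
  | and θ₁ θ₂ ih₁ ih₂ => exact fun hS hT h => ⟨ih₁ hS hT h.1, ih₂ hS hT h.2⟩
  | ex ψ ih =>
      rintro S S' t t' hS hT ⟨h1, h2⟩
      refine ⟨ih hS hT h1, fun w hw hex => ?_⟩
      obtain ⟨x, hx1, hx2⟩ := h2 w (fun i => hS _ (hw i)) hex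
      exact ⟨x, hT _ hx1, hx2⟩

lemma forall_snoc {n} {P : M → Prop} {v : Fin n → M} {x : M}
    (h : ∀ i, P (v i)) (hx : P x) : ∀ i, P ((Fin.snoc v x : Fin (n+1) → M) i) := by
  intro i
  induction i using Fin.lastCases with
  | last => simpa
  | cast j => simpa using h j

@[simp] lemma realizeIn_mem {t : M} {n} (i j : Fin n) (v : Fin n → M) :
    RealizeIn E A t (.mem i j) v ↔ E (v i) (v j) := Iff.rfl
@[simp] lemma realizeIn_eq {t : M} {n} (i j : Fin n) (v : Fin n → M) :
    RealizeIn E A t (.eq i j) v ↔ v i = v j := Iff.rfl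
@[simp] lemma realizeIn_ur {t : M} {n} (i : Fin n) (v : Fin n → M) :
    RealizeIn E A t (.ur i) v ↔ A (v i) := Iff.rfl
@[simp] lemma realizeIn_not {t : M} {n} (φ : Fml n) (v : Fin n → M) :
    RealizeIn E A t (.not φ) v ↔ ¬ RealizeIn E A t φ v := Iff.rfl
@[simp] lemma realizeIn_and {t : M} {n} (φ ψ : Fml n) (v : Fin n → M) :
    RealizeIn E A t (.and φ ψ) v ↔ (RealizeIn E A t φ v ∧ RealizeIn E A t ψ v) := Iff.rfl
@[simp] lemma realizeIn_ex {t : M} {n} (φ : Fml (n+1)) (v : Fin n → M) :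
    RealizeIn E A t (.ex φ) v ↔ ∃ x, E x t ∧ RealizeIn E A t φ (Fin.snoc v x) := Iff.rfl

/-- Tarski–Vaught. -/
lemma tv_lemma (t : M) : ∀ {k} (θ : Fml k), WitClS E A (fun z => E z t) t θ →
    ∀ v : Fin k → M, (∀ i, E (v i) t) → (Realize E A θ v ↔ RealizeIn E A t θ v) := by
  intro k θ
  induction θ with
  | mem i j => intro _ v _; exact Iff.rfl
  | eq i j => intro _ v _; exact Iff.rfl
  | ur i => intro _ v _; exact Iff.rfl
  | not θ ih => intro h v hv; simp only [realize_not, realizeIn_not, ih h v hv]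
  | and θ₁ θ₂ ih₁ ih₂ =>
      intro h v hv; simp only [realize_and, realizeIn_and, ih₁ h.1 v hv, ih₂ h.2 v hv]
  | ex ψ ih =>
      intro h v hv
      simp only [realize_ex, realizeIn_ex]
      constructor
      · rintro ⟨x, hx⟩
        obtain ⟨x', hx't, hx'⟩ := h.2 v hv ⟨x, hx⟩
        exact ⟨x', hx't, (ih h.1 _ (forall_snoc (P := fun z => E z t) hv hx't)).mp hx'⟩
      · rintro ⟨x, hxt, hx⟩
        exact ⟨x, (ih h.1 _ (forall_snoc (P := fun z => E z t) hv hxt)).mpr hx⟩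

/- ### The step formula for DC -/

def V4 (x o s t : M) : Fin 4 → M :=
  Fin.snoc (Fin.snoc (Fin.snoc (Fin.snoc (fun i : Fin 0 => i.elim0) x) o) s) t

@[simp] lemma V4_0 {x o s t : M} {h : (0:ℕ) < 4} : V4 x o s t ⟨0, h⟩ = x := by
  simp (config := { decide := true }) [V4, snocE]
@[simp] lemma V4_1 {x o s t : M} {h : (1:ℕ) < 4} : V4 x o s t ⟨1, h⟩ = o := by
  simp (config := { decide := true }) [V4, snocE]
@[simp] lemma V4_2 {x o s t : M} {h : (2:ℕ) < 4} : V4 x o s t ⟨2, h⟩ = s := by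
  simp (config := { decide := true }) [V4, snocE]
@[simp] lemma V4_3 {x o s t : M} {h : (3:ℕ) < 4} : V4 x o s t ⟨3, h⟩ = t := by
  simp (config := { decide := true }) [V4, snocE]

@[simp] lemma V4_0' {x o s t : M} : V4 x o s t 0 = x := V4_0
@[simp] lemma V4_1' {x o s t : M} : V4 x o s t 1 = o := V4_1
@[simp] lemma V4_2' {x o s t : M} : V4 x o s t 2 = s := V4_2
@[simp] lemma V4_3' {x o s t : M} : V4 x o s t 3 = t := V4_3

def srcMap {m : ℕ} (i : Fin m) : Fin 5 → Fin (4+m) := fun k =>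
  ⟨if k.val = 4 then 4+i.val else k.val, by rcases k with ⟨kv, hk⟩; simp; split <;> omega⟩

def psiMap (m : ℕ) : Fin (m+1) → Fin (4+m+1) := fun i =>
  ⟨if i.val = m then 4+m else 4+i.val, by rcases i with ⟨iv, hi⟩; simp; split <;> omega⟩

def clause {m : ℕ} (ψ : Fml (m+1)) : Fml 4 :=
  Fml.alls m (Fml.imp
    (Fml.conj ((List.finRange m).map fun i => Fml.rename (srcMap i) srcF))
    (Fml.imp (.ex (Fml.rename (psiMap m) ψ))
      (.ex (.and (.mem (Fin.last (4+m)) (fv 3)) (Fml.rename (psiMap m) ψ)))))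

lemma realize_clause {m : ℕ} (ψ : Fml (m+1)) (x o s t : M) :
    Realize E A (clause ψ) (V4 x o s t) ↔
      ∀ w : Fin m → M, (∀ i, Src E A x o s (w i)) →
        (∃ x', Realize E A ψ (Fin.snoc w x')) →
        ∃ x', E x' t ∧ Realize E A ψ (Fin.snoc w x') := by
  rw [clause, realize_alls]
  refine forall_congr' fun w => ?_
  rw [realize_imp, realize_imp]
  have hsrc : ∀ i : Fin m,
      Realize E A (Fml.rename (srcMap i) srcF) (apnd (V4 x o s t) w) ↔
        Src E A x o s (w i) := by
    intro i
    rw [realize_rename, realize_srcF]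
    have e0 : (apnd (V4 x o s t) w ∘ srcMap i) (fv 0) = x := by
      show apnd (V4 x o s t) w (srcMap i (fv 0)) = x
      have h1 : srcMap i (fv 0) = ⟨0, by omega⟩ := rfl
      rw [h1, apnd_lt _ _ 0 (by omega), V4_0]
    have e1 : (apnd (V4 x o s t) w ∘ srcMap i) (fv 1) = o := by
      show apnd (V4 x o s t) w (srcMap i (fv 1)) = o
      have h1 : srcMap i (fv 1) = ⟨1, by omega⟩ := rfl
      rw [h1, apnd_lt _ _ 1 (by omega), V4_1]
    have e2 : (apnd (V4 x o s t) w ∘ srcMap i) (fv 2) = s := by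
      show apnd (V4 x o s t) w (srcMap i (fv 2)) = s
      have h1 : srcMap i (fv 2) = ⟨2, by omega⟩ := rfl
      rw [h1, apnd_lt _ _ 2 (by omega), V4_2]
    have e4 : (apnd (V4 x o s t) w ∘ srcMap i) (fv 4) = w i := by
      show apnd (V4 x o s t) w (srcMap i (fv 4)) = w i
      have h1 : srcMap i (fv 4) = ⟨4 + i.val, by omega⟩ := rfl
      rw [h1, apnd_ge _ _ (4 + i.val) (by omega) _ (by omega)]
      congr 1
      ext
      simp
    rw [e0, e1, e2, e4]
  have hψ : ∀ x' : M,
      Realize E A (Fml.rename (psiMap m) ψ) (Fin.snoc (apnd (V4 x o s t) w) x') ↔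
        Realize E A ψ (Fin.snoc w x') := by
    intro x'
    rw [realize_rename]
    have hfun : (Fin.snoc (apnd (V4 x o s t) w) x' : Fin (4+m+1) → M) ∘ psiMap m
        = Fin.snoc w x' := by
      funext k
      show (Fin.snoc (apnd (V4 x o s t) w) x' : Fin (4+m+1) → M) (psiMap m k) = _
      by_cases hk : k.val = m
      · have h1 : psiMap m k = ⟨4+m, by omega⟩ := by simp [psiMap, hk]
        have h2 : k = Fin.last m := by ext; simpa using hk
        rw [h1, h2]
        rw [show (⟨4+m, by omega⟩ : Fin (4+m+1)) = Fin.last (4+m) from rfl, Fin.snoc_last,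
          Fin.snoc_last]
      · have hkm : k.val < m := by rcases k with ⟨kv, hkv⟩; simp at hk ⊢; omega
        have h1 : psiMap m k = ⟨4+k.val, by omega⟩ := by simp [psiMap, hk]
        rw [h1, snocE]
        rw [dif_pos (show 4+k.val < 4+m by omega)]
        rw [apnd_ge _ _ (4+k.val) (by omega) _ (by omega)]
        rw [snocE, dif_pos (show (k:ℕ) < m from hkm)]
        congr 1
        ext
        simp
    rw [hfun]
  have hmem : ∀ x' : M,
      Realize E A (.mem (Fin.last (4+m)) (fv 3) : Fml (4+m+1))
        (Fin.snoc (apnd (V4 x o s t) w) x') ↔ E x' t := by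
    intro x'
    rw [realize_mem, Fin.snoc_last]
    have h1 : (Fin.snoc (apnd (V4 x o s t) w) x' : Fin (4+m+1) → M) (fv 3) = t := by
      rw [snocE, dif_pos (show ((fv 3 : Fin (4+m+1)) : ℕ) < 4+m by simp; omega)]
      rw [show (⟨((fv 3 : Fin (4+m+1)) : ℕ), _⟩ : Fin (4+m)) = (⟨3, by omega⟩ : Fin (4+m))
        from by ext; simp]
      rw [apnd_lt _ _ 3 (by omega), V4_3]
    rw [h1]
  constructor
  · intro h hw hex
    obtain ⟨x1, hx1⟩ := hex
    obtain ⟨x2, hx2⟩ := (realize_ex _ _).mp (h ((realize_conj _ _).mpr (by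
        intro f hf
        simp only [List.mem_map, List.mem_finRange, true_and] at hf
        obtain ⟨i, rfl⟩ := hf
        exact (hsrc i).mpr (hw i)))
      ((realize_ex _ _).mpr ⟨x1, (hψ x1).mpr hx1⟩))
    rw [realize_and, hmem, hψ] at hx2
    exact ⟨x2, hx2⟩
  · intro h h1 h2
    obtain ⟨x1, hx1⟩ := (realize_ex _ _).mp h2
    rw [hψ] at hx1
    have hw : ∀ i, Src E A x o s (w i) := by
      intro i
      have := (realize_conj _ _).mp h1 _
        (List.mem_map.mpr ⟨i, List.mem_finRange i, rfl⟩)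
      exact (hsrc i).mp this
    obtain ⟨x2, hx2t, hx2⟩ := h hw ⟨x1, hx1⟩
    exact (realize_ex _ _).mpr
      ⟨x2, (realize_and _ _ _).mpr ⟨(hmem x2).mpr hx2t, (hψ x2).mpr hx2⟩⟩

def witF : ∀ {k : ℕ}, Fml k → Fml 4
  | _, .not θ => witF θ
  | _, .and θ₁ θ₂ => .and (witF θ₁) (witF θ₂)
  | _, .ex ψ => .and (witF ψ) (clause ψ)
  | _, .mem _ _ => Fml.trueF
  | _, .eq _ _ => Fml.trueF
  | _, .ur _ => Fml.trueF

lemma realize_witF : ∀ {k} (θ : Fml k) (x o s t : M),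
    Realize E A (witF θ) (V4 x o s t) ↔ WitClS E A (Src E A x o s) t θ := by
  intro k θ
  induction θ with
  | mem i j => intro x o s t; simp [witF, WitClS]
  | eq i j => intro x o s t; simp [witF, WitClS]
  | ur i => intro x o s t; simp [witF, WitClS]
  | not θ ih => intro x o s t; exact ih x o s t
  | and θ₁ θ₂ ih₁ ih₂ =>
      intro x o s t
      show Realize E A (.and (witF θ₁) (witF θ₂)) _ ↔ _
      rw [realize_and, ih₁, ih₂]
      rfl
  | ex ψ ih =>
      intro x o s t
      show Realize E A (.and (witF ψ) (clause ψ)) _ ↔ _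
      rw [realize_and, ih, realize_clause]
      rfl



/- ### Cover sets via Collection -/

lemma apnd_snoc {n m : ℕ} (q : Fin n → M) (w : Fin m → M) (a : M) :
    apnd q (Fin.snoc w a) = Fin.snoc (apnd q w) a := by
  have hcomp : (Fin.snoc w a : Fin (m+1) → M) ∘ Fin.castSucc = w := by
    funext j; simp
  have h0 : apnd q (Fin.snoc w a)
      = Fin.snoc (apnd q ((Fin.snoc w a : Fin (m+1) → M) ∘ Fin.castSucc))
        ((Fin.snoc w a : Fin (m+1) → M) (Fin.last m)) := rfl
  rw [h0, hcomp, Fin.snoc_last]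

lemma snoc3_lt {j : ℕ} (q : Fin j → M) (u a y : M) (i : ℕ) (h : i < j) (h3 : i < j+3) :
    (Fin.snoc (Fin.snoc (Fin.snoc q u) a) y : Fin (j+3) → M) ⟨i, h3⟩ = q ⟨i, h⟩ := by
  rw [snocE, dif_pos (show ((⟨i, h3⟩ : Fin (j+3)) : ℕ) < j+2 from by simpa using by omega)]
  rw [snocE, dif_pos (show i < j+1 from by omega)]
  rw [snocE, dif_pos (show i < j from h)]

lemma snoc3_j {j : ℕ} (q : Fin j → M) (u a y : M) (h3 : j < j+3) :
    (Fin.snoc (Fin.snoc (Fin.snoc q u) a) y : Fin (j+3) → M) ⟨j, h3⟩ = u := by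
  rw [snocE, dif_pos (show j < j+2 from by omega)]
  rw [snocE, dif_pos (show j < j+1 from by omega)]
  rw [snocE, dif_neg (show ¬ j < j from by omega)]

lemma snoc3_j1 {j : ℕ} (q : Fin j → M) (u a y : M) (h3 : j+1 < j+3) :
    (Fin.snoc (Fin.snoc (Fin.snoc q u) a) y : Fin (j+3) → M) ⟨j+1, h3⟩ = a := by
  rw [snocE, dif_pos (show j+1 < j+2 from by omega)]
  rw [snocE, dif_neg (show ¬ j+1 < j+1 from by omega)]

lemma snoc3_j2 {j : ℕ} (q : Fin j → M) (u a y : M) (h3 : j+2 < j+3) :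
    (Fin.snoc (Fin.snoc (Fin.snoc q u) a) y : Fin (j+3) → M) ⟨j+2, h3⟩ = y := by
  rw [snocE, dif_neg (show ¬ j+2 < j+2 from by omega)]

/-- variable reordering for the induction step of the cover lemma. -/
def tau (j m : ℕ) : Fin (j+m+1+1) → Fin ((j+1)+m+1) := fun i =>
  ⟨if i.val < j then i.val else if i.val = j+m then j else
    if i.val < j+m then i.val+1 else j+m+1, by
      rcases i with ⟨iv, hi⟩; dsimp; split_ifs <;> omega⟩

lemma snocE_mk {n : ℕ} (v : Fin n → M) (x : M) (i : ℕ) (hi : i < n+1) :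
    (Fin.snoc v x : Fin (n+1) → M) ⟨i, hi⟩ = if h : i < n then v ⟨i, h⟩ else x := by
  rw [snocE]

lemma apnd_eval {n m : ℕ} (v : Fin n → M) (w : Fin m → M) (i : ℕ) (hi : i < n+m) :
    apnd v w ⟨i, hi⟩ = if h : i < n then v ⟨i, h⟩ else w ⟨i-n, by omega⟩ := by
  by_cases h : i < n
  · rw [dif_pos h]; exact apnd_lt v w i h hi
  · rw [dif_neg h]; exact apnd_ge v w i (by omega) hi (by omega)

lemma tau_val_eq {j m : ℕ} (q : Fin j → M) (w' : Fin m → M) (a x : M) :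
    (Fin.snoc (apnd (Fin.snoc q a) w') x : Fin ((j+1)+m+1) → M) ∘ tau j m
      = Fin.snoc (apnd q (Fin.snoc w' a)) x := by
  rw [apnd_snoc]
  funext i
  rcases i with ⟨iv, hi⟩
  show (Fin.snoc (apnd (Fin.snoc q a) w') x : Fin ((j+1)+m+1) → M) (tau j m ⟨iv, hi⟩) = _
  by_cases h1 : iv < j
  · rw [show tau j m ⟨iv, hi⟩ = ⟨iv, by omega⟩ from by
      ext; simp [tau]; split_ifs <;> omega]
    rw [snocE_mk _ _ iv (by omega), dif_pos (show iv < j+1+m from by omega),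
      apnd_eval _ _ iv (by omega), dif_pos (show iv < j+1 from by omega),
      snocE_mk _ _ iv (by omega), dif_pos h1,
      snocE_mk _ _ iv (by omega), dif_pos (show iv < j+m+1 from by omega),
      snocE_mk _ _ iv (by show iv < j+m+1; omega),
      dif_pos (show iv < Nat.add j m from by show iv < j+m; omega),
      apnd_eval _ _ iv (by omega), dif_pos h1]
  · by_cases h2 : iv = j+m
    · rw [show tau j m ⟨iv, hi⟩ = ⟨j, by omega⟩ from by
        ext; simp [tau]; split_ifs <;> omega]
      rw [snocE_mk _ _ j (by omega), dif_pos (show j < j+1+m from by omega),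
        apnd_eval _ _ j (by omega), dif_pos (show j < j+1 from by omega),
        snocE_mk _ _ j (by omega), dif_neg (show ¬ j < j from by omega),
        snocE_mk _ _ iv (by omega), dif_pos (show iv < j+m+1 from by omega),
        snocE_mk _ _ iv (by show iv < j+m+1; omega),
        dif_neg (show ¬ iv < Nat.add j m from by show ¬ iv < j+m; omega)]
    · by_cases h3 : iv < j+m
      · rw [show tau j m ⟨iv, hi⟩ = ⟨iv+1, by omega⟩ from by
          ext; simp [tau]; split_ifs <;> omega]
        rw [snocE_mk _ _ (iv+1) (by omega), dif_pos (show iv+1 < j+1+m from by omega),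
          apnd_eval _ _ (iv+1) (by omega), dif_neg (show ¬ iv+1 < j+1 from by omega),
          snocE_mk _ _ iv (by omega), dif_pos (show iv < j+m+1 from by omega),
          snocE_mk _ _ iv (by show iv < j+m+1; omega),
          dif_pos (show iv < Nat.add j m from h3),
          apnd_eval _ _ iv (by omega), dif_neg h1]
        congr 1
        ext; simp; try omega
      · rw [show tau j m ⟨iv, hi⟩ = ⟨j+m+1, by omega⟩ from by
          ext; simp [tau]; split_ifs <;> omega]
        rw [snocE_mk _ _ (j+m+1) (by omega), dif_neg (show ¬ j+m+1 < j+1+m from by omega),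
          snocE_mk _ _ iv (by omega), dif_neg (show ¬ iv < j+m+1 from by omega)]

def covMap (j m : ℕ) : Fin (j+m+1+1) → Fin ((j+3)+m+1) := fun i =>
  ⟨if i.val < j then i.val else if i.val = j+m then j+1 else
    if i.val < j+m then i.val+3 else j+3+m, by
      rcases i with ⟨iv, hi⟩; dsimp; split_ifs <;> omega⟩

/-- the Collection formula for the cover lemma; context: `q` (j), `u` at j, `a` at j+1,
`y` at j+2, then `m` universally quantified tuple variables, then the witness. -/
def covF (j m : ℕ) (ψ : Fml (j+m+1+1)) : Fml (j+3) :=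
  Fml.alls m (Fml.imp
    (Fml.conj ((List.finRange m).map fun i =>
      .mem (⟨j+3+i.val, by omega⟩ : Fin ((j+3)+m)) (⟨j, by omega⟩ : Fin ((j+3)+m))))
    (Fml.imp (.ex (Fml.rename (covMap j m) ψ))
      (.ex (.and (.mem (Fin.last ((j+3)+m)) (⟨j+2, by omega⟩ : Fin ((j+3)+m+1)))
        (Fml.rename (covMap j m) ψ)))))

lemma covMap_val_eq {j m : ℕ} (q : Fin j → M) (u a y : M) (w' : Fin m → M) (x : M) :
    (Fin.snoc (apnd (Fin.snoc (Fin.snoc (Fin.snoc q u) a) y) w') x :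
        Fin ((j+3)+m+1) → M) ∘ covMap j m
      = Fin.snoc (apnd q (Fin.snoc w' a)) x := by
  rw [apnd_snoc]
  funext i
  rcases i with ⟨iv, hi⟩
  show (Fin.snoc (apnd (Fin.snoc (Fin.snoc (Fin.snoc q u) a) y) w') x :
      Fin ((j+3)+m+1) → M) (covMap j m ⟨iv, hi⟩) = _
  by_cases h1 : iv < j
  · rw [show covMap j m ⟨iv, hi⟩ = ⟨iv, by omega⟩ from by
      ext; simp [covMap]; split_ifs <;> omega]
    rw [snocE_mk _ _ iv (by omega), dif_pos (show iv < j+3+m from by omega),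
      apnd_eval _ _ iv (by omega), dif_pos (show iv < j+3 from by omega),
      snoc3_lt q u a y iv h1,
      snocE_mk _ _ iv (by omega), dif_pos (show iv < j+m+1 from by omega),
      snocE_mk _ _ iv (by show iv < j+m+1; omega),
      dif_pos (show iv < Nat.add j m from by show iv < j+m; omega),
      apnd_eval _ _ iv (by omega), dif_pos h1]
  · by_cases h2 : iv = j+m
    · rw [show covMap j m ⟨iv, hi⟩ = ⟨j+1, by omega⟩ from by
        ext; simp [covMap]; split_ifs <;> omega]
      rw [snocE_mk _ _ (j+1) (by omega), dif_pos (show j+1 < j+3+m from by omega),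
        apnd_eval _ _ (j+1) (by omega), dif_pos (show j+1 < j+3 from by omega),
        snoc3_j1 q u a y,
        snocE_mk _ _ iv (by omega), dif_pos (show iv < j+m+1 from by omega),
        snocE_mk _ _ iv (by show iv < j+m+1; omega),
        dif_neg (show ¬ iv < Nat.add j m from by show ¬ iv < j+m; omega)]
    · by_cases h3 : iv < j+m
      · rw [show covMap j m ⟨iv, hi⟩ = ⟨iv+3, by omega⟩ from by
          ext; simp [covMap]; split_ifs <;> omega]
        rw [snocE_mk _ _ (iv+3) (by omega), dif_pos (show iv+3 < j+3+m from by omega),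
          apnd_eval _ _ (iv+3) (by omega), dif_neg (show ¬ iv+3 < j+3 from by omega),
          snocE_mk _ _ iv (by omega), dif_pos (show iv < j+m+1 from by omega),
          snocE_mk _ _ iv (by show iv < j+m+1; omega),
          dif_pos (show iv < Nat.add j m from h3),
          apnd_eval _ _ iv (by omega), dif_neg h1]
        congr 1
        ext; simp; try omega
      · rw [show covMap j m ⟨iv, hi⟩ = ⟨j+3+m, by omega⟩ from by
          ext; simp [covMap]; split_ifs <;> omega]
        have hl1 : (⟨j+3+m, by omega⟩ : Fin ((j+3)+m+1)) = Fin.last ((j+3)+m) := by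
          ext; simp
        rw [hl1, Fin.snoc_last,
          snocE_mk _ _ iv (by omega), dif_neg (show ¬ iv < j+m+1 from by omega)]

lemma realize_covF {j m : ℕ} (ψ : Fml (j+m+1+1)) (q : Fin j → M) (u a y : M) :
    Realize E A (covF j m ψ)
      (Fin.snoc (Fin.snoc (Fin.snoc q u) a) y : Fin (j+3) → M) ↔
      ∀ w' : Fin m → M, (∀ i, E (w' i) u) →
        (∃ x, Realize E A ψ (Fin.snoc (apnd q (Fin.snoc w' a)) x)) →
        ∃ x, E x y ∧ Realize E A ψ (Fin.snoc (apnd q (Fin.snoc w' a)) x) := by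
  set V := (Fin.snoc (Fin.snoc (Fin.snoc q u) a) y : Fin (j+3) → M) with hV
  rw [covF, realize_alls]
  refine forall_congr' fun w' => ?_
  rw [realize_imp, realize_imp]
  have hmemu : Realize E A (Fml.conj ((List.finRange m).map fun i =>
      .mem (⟨j+3+i.val, by omega⟩ : Fin ((j+3)+m)) (⟨j, by omega⟩ : Fin ((j+3)+m))))
      (apnd V w') ↔ ∀ i, E (w' i) u := by
    rw [realize_conj]
    have heval : ∀ i : Fin m,
        Realize E A (.mem (⟨j+3+i.val, by omega⟩ : Fin ((j+3)+m))
          (⟨j, by omega⟩ : Fin ((j+3)+m))) (apnd V w') ↔ E (w' i) u := by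
      intro i
      rw [realize_mem, apnd_eval _ _ (j+3+i.val) (by omega),
        dif_neg (show ¬ j+3+i.val < j+3 from by omega),
        apnd_eval _ _ j (by omega), dif_pos (show j < j+3 from by omega),
        hV, snoc3_j q u a y,
        show (⟨j+3+i.val-(j+3), by omega⟩ : Fin m) = i from by ext; simp; try omega]
    constructor
    · intro h i
      exact (heval i).mp (h _ (List.mem_map.mpr ⟨i, List.mem_finRange i, rfl⟩))
    · intro h f hf
      simp only [List.mem_map, List.mem_finRange, true_and] at hf
      obtain ⟨i, rfl⟩ := hf
      exact (heval i).mpr (h i)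
  have hψx : ∀ x, Realize E A (Fml.rename (covMap j m) ψ) (Fin.snoc (apnd V w') x) ↔
      Realize E A ψ (Fin.snoc (apnd q (Fin.snoc w' a)) x) := by
    intro x
    rw [realize_rename, hV, covMap_val_eq]
  have hymem : ∀ x, Realize E A
      (.mem (Fin.last ((j+3)+m)) (⟨j+2, by omega⟩ : Fin ((j+3)+m+1)) : Fml ((j+3)+m+1))
      (Fin.snoc (apnd V w') x) ↔ E x y := by
    intro x
    rw [realize_mem, Fin.snoc_last, snocE_mk _ _ (j+2) (by omega),
      dif_pos (show j+2 < j+3+m from by omega),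
      apnd_eval _ _ (j+2) (by omega), dif_pos (show j+2 < j+3 from by omega),
      hV, snoc3_j2 q u a y]
  rw [hmemu]
  constructor
  · intro h hw hex
    obtain ⟨x1, hx1⟩ := hex
    obtain ⟨x2, hx2⟩ := (realize_ex _ _).mp (h hw ((realize_ex _ _).mpr ⟨x1, (hψx x1).mpr hx1⟩))
    rw [realize_and, hymem, hψx] at hx2
    exact ⟨x2, hx2⟩
  · intro h hw h2
    obtain ⟨x1, hx1⟩ := (realize_ex _ _).mp h2
    rw [hψx] at hx1
    obtain ⟨x2, hx2t, hx2⟩ := h hw ⟨x1, hx1⟩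
    exact (realize_ex _ _).mpr
      ⟨x2, (realize_and _ _ _).mpr ⟨(hymem x2).mpr hx2t, (hψx x2).mpr hx2⟩⟩

/-- Cover sets exist, by Collection and meta-induction on the number of variables. -/
lemma cover_lemma (hA : AxiomA E A) (hPair : Pairing E A) (hUn : UnionAx E A)
    (hInf : InfinityAx E A) (hColl : CollectionScheme E A) :
    ∀ (m j : ℕ) (ψ : Fml (j+m+1)) (q : Fin j → M) (u : M),
      ∃ t, ∀ w : Fin m → M, (∀ i, E (w i) u) →
        (∃ x, Realize E A ψ (Fin.snoc (apnd q w) x)) →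
        ∃ x, E x t ∧ Realize E A ψ (Fin.snoc (apnd q w) x) := by
  intro m
  induction m with
  | zero =>
      intro j ψ q u
      by_cases h : ∃ x, Realize E A ψ (Fin.snoc q x)
      · obtain ⟨x0, hx0⟩ := h
        obtain ⟨z, _, hz⟩ := sing_exists hA hPair x0
        exact ⟨z, fun w _ _ => ⟨x0, (hz x0).mpr rfl, hx0⟩⟩
      · obtain ⟨e, _, _⟩ := empty_exists hInf
        exact ⟨e, fun w _ hex => absurd hex h⟩
  | succ m ih =>
      intro j ψ q u
      have key : ∀ a : M, ∃ y, ∀ w' : Fin m → M, (∀ i, E (w' i) u) →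
          (∃ x, Realize E A ψ (Fin.snoc (apnd q (Fin.snoc w' a)) x)) →
          ∃ x, E x y ∧ Realize E A ψ (Fin.snoc (apnd q (Fin.snoc w' a)) x) := by
        intro a
        obtain ⟨y, hy⟩ := ih (j+1) (Fml.rename (tau j m) ψ) (Fin.snoc q a) u
        refine ⟨y, fun w' hw' hex => ?_⟩
        have hval : ∀ x, Realize E A (Fml.rename (tau j m) ψ)
            (Fin.snoc (apnd (Fin.snoc q a) w') x) ↔
            Realize E A ψ (Fin.snoc (apnd q (Fin.snoc w' a)) x) := by
          intro x
          rw [realize_rename, tau_val_eq]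
        obtain ⟨x, hxy, hx⟩ := hy w' hw' (by
          obtain ⟨x, hx⟩ := hex
          exact ⟨x, (hval x).mpr hx⟩)
        exact ⟨x, hxy, (hval x).mp hx⟩
      obtain ⟨vset, hvset⟩ := hColl (j+1) (covF j m ψ) (Fin.snoc q u) u (by
        intro a _
        obtain ⟨y, hy⟩ := key a
        exact ⟨y, (realize_covF ψ q u a y).mpr hy⟩)
      obtain ⟨t, ht⟩ := hUn vset
      refine ⟨t, fun w hw hex => ?_⟩
      set a := w (Fin.last m) with ha
      set w' := w ∘ Fin.castSucc with hw'
      have hwsnoc : w = Fin.snoc w' a := by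
        funext i
        induction i using Fin.lastCases with
        | last => simp [ha]
        | cast jj => simp [hw']
      have happ : apnd q w = apnd q (Fin.snoc w' a) := by rw [← hwsnoc]
      obtain ⟨y, hyv, hyr⟩ := hvset a (hw (Fin.last m))
      have hcov := (realize_covF ψ q u a y).mp hyr w' (fun i => hw (Fin.castSucc i))
        (by rw [happ] at hex; exact hex)
      obtain ⟨x, hxy, hx⟩ := hcov
      refine ⟨x, (ht x).mpr ⟨y, hyv, hxy⟩, ?_⟩
      rw [happ]
      exact hx


/- ### The step formula for DC and existence of steps -/

def C1F : Fml 4 := Fml.all (Fml.imp (.mem (fv 4) (fv 0)) (.mem (fv 4) (fv 3)))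
def C2F : Fml 4 := Fml.all (Fml.imp (.mem (fv 4) (fv 1)) (.mem (fv 4) (fv 3)))

def c3map : Fin 3 → Fin 7 := fun i =>
  if i.val = 0 then fv 5 else if i.val = 1 then fv 6 else fv 4

def C3F : Fml 4 :=
  Fml.all (Fml.all (Fml.all (Fml.imp
    (.and (.mem (fv 4) (fv 2)) (Fml.rename c3map KPf))
    (Fml.all (Fml.imp (.mem (fv 7) (fv 6))
      (.and (.mem (fv 7) (fv 3))
        (Fml.all (Fml.imp (.mem (fv 8) (fv 7)) (.mem (fv 8) (fv 3))))))))))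

def stepF {n : ℕ} (φ : Fml n) : Fml 4 := .and C1F (.and C2F (.and C3F (witF φ)))

def StepP (E : M → M → Prop) (A : M → Prop) {n : ℕ} (φ : Fml n) (x o s t : M) : Prop :=
  (∀ z, E z x → E z t) ∧ (∀ z, E z o → E z t) ∧
    (∀ p a u, E p s → IsKPair E A a u p → ∀ y, E y u → (E y t ∧ ∀ z, E z y → E z t)) ∧
    WitClS E A (Src E A x o s) t φ

lemma realize_C1F (x o s t : M) :
    Realize E A C1F (V4 x o s t) ↔ ∀ z, E z x → E z t := by
  simp only [fv, C1F, realize_all, realize_imp, realize_mem, snocE, fv_val]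
  norm_num [V4_0', V4_1', V4_2', V4_3']

lemma realize_C2F (x o s t : M) :
    Realize E A C2F (V4 x o s t) ↔ ∀ z, E z o → E z t := by
  simp only [fv, C2F, realize_all, realize_imp, realize_mem, snocE, fv_val]
  norm_num [V4_0', V4_1', V4_2', V4_3']

lemma realize_C3F (x o s t : M) :
    Realize E A C3F (V4 x o s t) ↔
      ∀ p a u, E p s → IsKPair E A a u p →
        ∀ y, E y u → (E y t ∧ ∀ z, E z y → E z t) := by
  simp only [fv, C3F, c3map, realize_all, realize_imp, realize_and, realize_mem,
    realize_rename, realize_KPf, snocE, fv_val, Function.comp]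
  norm_num [V4_0', V4_1', V4_2', V4_3']

lemma realize_stepF {n : ℕ} (φ : Fml n) (x o s t : M) :
    Realize E A (stepF φ) (V4 x o s t) ↔ StepP E A φ x o s t := by
  rw [stepF, StepP, realize_and, realize_and, realize_and, realize_C1F, realize_C2F,
    realize_C3F, realize_witF]

lemma step_exists (hA : AxiomA E A) (hPair : Pairing E A) (hUn : UnionAx E A)
    (hInf : InfinityAx E A) (hColl : CollectionScheme E A)
    {n : ℕ} (φ : Fml n) (x o s : M) : ∃ t, StepP E A φ x o s t := by
  obtain ⟨s1, hs1⟩ := hUn s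
  obtain ⟨s2, hs2⟩ := hUn s1
  obtain ⟨s3, hs3⟩ := hUn s2
  obtain ⟨s4, hs4⟩ := hUn s3
  obtain ⟨xo, hxo⟩ := binUnion_exists hPair hUn x o
  obtain ⟨U, hU⟩ := binUnion_exists hPair hUn xo s3
  obtain ⟨t0, ht0⟩ := binUnion_exists hPair hUn U s4
  have hval_mem : ∀ p a u, E p s → IsKPair E A a u p → E u s2 := by
    intro p a u hp hkp
    obtain ⟨d, hdp, -, hud, -⟩ := kp_double hA hPair hkp
    exact (hs2 u).mpr ⟨d, (hs1 d).mpr ⟨p, hp, hdp⟩, hud⟩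
  have hsrcU : ∀ z, Src E A x o s z → E z U := by
    intro z hz
    rcases hz with h | h | ⟨p, hp, a, u, hkp, hzu⟩
    · exact (hU z).mpr (Or.inl ((hxo z).mpr (Or.inl h)))
    · exact (hU z).mpr (Or.inl ((hxo z).mpr (Or.inr h)))
    · exact (hU z).mpr (Or.inr ((hs3 z).mpr ⟨u, hval_mem p a u hp hkp, hzu⟩))
  have wits : ∀ (k : ℕ) (θ : Fml k), ∃ c, WitClS E A (Src E A x o s) c θ := by
    intro k θ
    induction θ with
    | mem i j => exact ⟨x, trivial⟩
    | eq i j => exact ⟨x, trivial⟩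
    | ur i => exact ⟨x, trivial⟩
    | not θ ih => exact ih
    | and θ₁ θ₂ ih₁ ih₂ =>
        obtain ⟨c1, hc1⟩ := ih₁
        obtain ⟨c2, hc2⟩ := ih₂
        obtain ⟨c, hc⟩ := binUnion_exists hPair hUn c1 c2
        exact ⟨c, witClS_mono _ (fun z h => h) (fun z h => (hc z).mpr (Or.inl h)) hc1,
          witClS_mono _ (fun z h => h) (fun z h => (hc z).mpr (Or.inr h)) hc2⟩
    | ex ψ ih =>
        obtain ⟨c1, hc1⟩ := ih
        rename_i k'
        obtain ⟨c2, hc2⟩ := cover_lemma hA hPair hUn hInf hColl k' 0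
          (Fml.rename (fun i : Fin (k'+1) => (⟨i.val, by omega⟩ : Fin (0+k'+1))) ψ)
          (fun i => i.elim0) U
        obtain ⟨c, hc⟩ := binUnion_exists hPair hUn c1 c2
        refine ⟨c, witClS_mono _ (fun z h => h) (fun z h => (hc z).mpr (Or.inl h)) hc1,
          fun w hw hex => ?_⟩
        have hvaleq : ∀ xx : M,
            Realize E A (Fml.rename (fun i : Fin (k'+1) => (⟨i.val, by omega⟩ : Fin (0+k'+1))) ψ)
              (Fin.snoc (apnd (fun i : Fin 0 => i.elim0) w) xx) ↔
            Realize E A ψ (Fin.snoc w xx) := by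
          intro xx
          rw [realize_rename]
          have hfun : (Fin.snoc (apnd (fun i : Fin 0 => i.elim0) w) xx : Fin (0+k'+1) → M) ∘
              (fun i : Fin (k'+1) => (⟨i.val, by omega⟩ : Fin (0+k'+1)))
              = Fin.snoc w xx := by
            funext i
            rcases i with ⟨iv, hi⟩
            show (Fin.snoc (apnd (fun i : Fin 0 => i.elim0) w) xx : Fin (0+k'+1) → M)
              ⟨iv, by omega⟩ = _
            by_cases h : iv < k'
            · rw [snocE_mk _ _ iv (by omega), dif_pos (show iv < 0+k' from by omega),
                apnd_eval _ _ iv (by omega), dif_neg (show ¬ iv < 0 from by omega),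
                snocE_mk _ _ iv (by omega), dif_pos h]
              rfl
            · rw [snocE_mk _ _ iv (by omega), dif_neg (show ¬ iv < 0+k' from by omega),
                snocE_mk _ _ iv (by omega), dif_neg (show ¬ iv < k' from h)]
          rw [hfun]
        obtain ⟨xx, hxc2, hxx⟩ := hc2 w (fun i => hsrcU _ (hw i)) (by
          obtain ⟨xx, hxxr⟩ := hex
          exact ⟨xx, (hvaleq xx).mpr hxxr⟩)
        exact ⟨xx, (hc xx).mpr (Or.inr hxc2), (hvaleq xx).mp hxx⟩
  obtain ⟨c, hcw⟩ := wits n φ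
  obtain ⟨t, ht⟩ := binUnion_exists hPair hUn t0 c
  have hUt : ∀ z, E z U → E z t := fun z h => (ht z).mpr (Or.inl ((ht0 z).mpr (Or.inl h)))
  refine ⟨t, ?_, ?_, ?_, ?_⟩
  · exact fun z hz => hUt z ((hU z).mpr (Or.inl ((hxo z).mpr (Or.inl hz))))
  · exact fun z hz => hUt z ((hU z).mpr (Or.inl ((hxo z).mpr (Or.inr hz))))
  · intro p a u hp hkp y hy
    have hus2 : E u s2 := hval_mem p a u hp hkp
    have hys3 : E y s3 := (hs3 y).mpr ⟨u, hus2, hy⟩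
    refine ⟨hUt y ((hU y).mpr (Or.inr hys3)), fun z hz => ?_⟩
    exact (ht z).mpr (Or.inl ((ht0 z).mpr (Or.inr ((hs4 z).mpr ⟨y, hys3, hz⟩))))
  · exact witClS_mono _ (fun z h => h) (fun z h => (ht z).mpr (Or.inr h)) hcw



/- ### The chain lemma -/

lemma chain_witcl {ι : Sort*} (T : ι → M) (SS : ι → M → Prop) (tstar : M)
    (hsub : ∀ (a : ι) (z : M), E z (T a) → E z tstar)
    (hcov : ∀ (m : ℕ) (v : Fin m → M), (∀ i, E (v i) tstar) → ∃ a : ι, ∀ i, SS a (v i)) :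
    ∀ {k} (θ : Fml k), (∀ a : ι, WitClS E A (SS a) (T a) θ) →
      WitClS E A (fun z => E z tstar) tstar θ := by
  intro k θ
  induction θ with
  | mem i j => intro _; trivial
  | eq i j => intro _; trivial
  | ur i => intro _; trivial
  | not θ ih => exact fun H => ih (fun a => H a)
  | and θ₁ θ₂ ih₁ ih₂ => exact fun H => ⟨ih₁ (fun a => (H a).1), ih₂ (fun a => (H a).2)⟩
  | ex ψ ih =>
      intro H
      refine ⟨ih (fun a => (H a).1), fun v hv hex => ?_⟩
      obtain ⟨a, ha⟩ := hcov _ v hv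
      obtain ⟨xx, hx1, hx2⟩ := (H a).2 v ha hex
      exact ⟨xx, hsub a xx hx1, hx2⟩


end Model

/-- Every model of ZFU_R satisfying every instance of the
DC_ω-scheme and every instance of the Collection scheme also satisfies every
instance of the reflection scheme RP. -/
theorem zfur_dcomega_collection_implies_rp {M : Type} (E : M → M → Prop) (A : M → Prop)
    (hZFUR : ZFUR E A) (hDC : DComegaScheme E A) (hColl : CollectionScheme E A) :
    RPScheme E A := by
  classical
  obtain ⟨⟨hA, hExt, hFound, hPair, hUn, hPow, hInf, hSep⟩, hRepl⟩ := hZFUR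
  intro n φ x
  obtain ⟨o, hOmega⟩ := omega_exists hA hExt hFound hPair hUn hInf hSep
  have hDCo := hDC o hOmega
  have hLim := hOmega.1
  have hOrd := hLim.1
  have hoTrans := hOrd.1
  have hoMemTr := hOrd.2.1
  have hoTri := hOrd.2.2
  obtain ⟨a0, ha0⟩ := hLim.2.1
  have hoLim := hLim.2.2
  have hyp : ∀ s, ∃ t, Realize E A (stepF φ)
      (Fin.snoc (Fin.snoc (Fin.snoc (Fin.snoc (fun i : Fin 0 => i.elim0) x) o) s) t) := by
    intro s
    obtain ⟨t, ht⟩ := step_exists hA hPair hUn hInf hColl φ x o s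
    exact ⟨t, (realize_stepF φ x o s t).mpr ht⟩
  obtain ⟨f, hfF, hfC⟩ := hDCo 2 (stepF φ)
    (Fin.snoc (Fin.snoc (fun i : Fin 0 => i.elim0) x) o) hyp
  choose sa ta hres hfv hstep using hfC
  have hstepP : ∀ a (ha : E a o), StepP E A φ x o (sa a ha) (ta a ha) :=
    fun a ha => (realize_stepF φ x o _ _).mp (hstep a ha)
  obtain ⟨t1, ht1⟩ := hUn f
  obtain ⟨t2, ht2⟩ := hUn t1
  obtain ⟨t3, ht3⟩ := hUn t2
  have hchain : ∀ {p d cc z : M}, E p f → E d p → E cc d → E z cc → E z t3 :=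
    fun hp hd hcc hz => (ht3 _).mpr ⟨_, (ht2 _).mpr ⟨_, (ht1 _).mpr ⟨_, hp, hd⟩, hcc⟩, hz⟩
  have hta_sub : ∀ a (ha : E a o), ∀ z, E z (ta a ha) → E z t3 := by
    intro a ha z hz
    obtain ⟨p, hpf, hkp⟩ := hfv a ha
    obtain ⟨d, hdp, -, hud, -⟩ := kp_double hA hPair hkp
    exact hchain hpf hdp hud hz
  have ho_sub : ∀ z, E z o → E z t3 := fun z hz =>
    hta_sub a0 ha0 z ((hstepP a0 ha0).2.1 z hz)
  have hx_sub : ∀ z, E z x → E z t3 := fun z hz =>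
    hta_sub a0 ha0 z ((hstepP a0 ha0).1 z hz)
  have helim : ∀ z, E z t3 → (E z o ∨ ∃ a, E a o ∧ ∃ u, FVal E A f a u ∧ E z u) := by
    intro z hz
    obtain ⟨cc, hcc2, hzcc⟩ := (ht3 z).mp hz
    obtain ⟨d, hd1, hccd⟩ := (ht2 cc).mp hcc2
    obtain ⟨p, hpf, hdp⟩ := (ht1 d).mp hd1
    obtain ⟨a', u', ha'o, hkp⟩ := hfF.2.1 p hpf
    rcases kp_mem_cases hkp hdp hccd with rfl | rfl
    · exact Or.inl (hoTrans.2 cc ha'o z hzcc)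
    · exact Or.inr ⟨a', ha'o, cc, ⟨p, hpf, hkp⟩, hzcc⟩
  have hrest_mem : ∀ a (ha : E a o), ∀ b u p, E p f → IsKPair E A b u p → E b a →
      E p (sa a ha) := by
    intro a ha b u p hpf hkp hba
    exact ((hres a ha).2 p).mpr ⟨hpf, b, u, hkp, hba⟩
  have hmax : ∀ l : List M, (∀ b ∈ l, E b o) →
      ∃ b, E b o ∧ ∀ cc ∈ l, cc = b ∨ E cc b := by
    intro l
    induction l with
    | nil => exact fun _ => ⟨a0, ha0, by simp⟩
    | cons hd tl ih =>
        intro hall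
        obtain ⟨b, hbo, hble⟩ := ih (fun cc hcc => hall cc (List.mem_cons_of_mem _ hcc))
        have hhd : E hd o := hall hd (List.mem_cons_self)
        rcases hoTri hd b hhd hbo with h | h | h
        · refine ⟨b, hbo, fun cc hcc => ?_⟩
          rcases List.mem_cons.mp hcc with rfl | hcc
          · exact Or.inr h
          · exact hble cc hcc
        · refine ⟨b, hbo, fun cc hcc => ?_⟩
          rcases List.mem_cons.mp hcc with rfl | hcc
          · exact Or.inl h
          · exact hble cc hcc
        · refine ⟨hd, hhd, fun cc hcc => ?_⟩
          rcases List.mem_cons.mp hcc with rfl | hcc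
          · exact Or.inl rfl
          · rcases hble cc hcc with rfl | h2
            · exact Or.inr h
            · exact Or.inr ((hoMemTr hd hhd).2 b h cc h2)
  have hwit : WitClS E A (fun z => E z t3) t3 φ := by
    refine chain_witcl (fun a : {a : M // E a o} => ta a.1 a.2)
      (fun a z => Src E A x o (sa a.1 a.2) z) t3
      (fun a z hz => hta_sub a.1 a.2 z hz) ?_ φ
      (fun a => (hstepP a.1 a.2).2.2.2)
    intro m v hv
    have htot : ∀ i : Fin m, ∃ a, E a o ∧
        (E (v i) o ∨ ∃ u, FVal E A f a u ∧ E (v i) u) := by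
      intro i
      rcases helim (v i) (hv i) with h | ⟨a, hao, hu⟩
      · exact ⟨a0, ha0, Or.inl h⟩
      · exact ⟨a, hao, Or.inr hu⟩
    choose g hg hgood using htot
    obtain ⟨b, hbo, hble⟩ := hmax (List.ofFn g) (by
      intro cc hcl
      obtain ⟨i, rfl⟩ := List.mem_ofFn.mp hcl
      exact hg i)
    obtain ⟨ap, hapo, hbap⟩ := hoLim b hbo
    refine ⟨⟨ap, hapo⟩, fun i => ?_⟩
    rcases hgood i with h | ⟨u, ⟨p, hpf, hkp⟩, hviu⟩
    · exact Or.inr (Or.inl h)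
    · have hgiap : E (g i) ap := by
        have hmem : g i ∈ List.ofFn g := List.mem_ofFn.mpr ⟨i, rfl⟩
        rcases hble _ hmem with heq | hlt
        · rw [heq]; exact hbap
        · exact (hoMemTr ap hapo).2 b hbap (g i) hlt
      exact Or.inr (Or.inr ⟨p, hrest_mem ap hapo (g i) u p hpf hkp hgiap,
        g i, u, hkp, hviu⟩)
  have htr3 : ∀ y, E y t3 → ∀ z, E z y → E z t3 := by
    intro y hy z hz
    rcases helim y hy with h | ⟨a, hao, u, ⟨p, hpf, hkp⟩, hyu⟩
    · exact ho_sub z (hoTrans.2 y h z hz)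
    · obtain ⟨ap, hapo, haap⟩ := hoLim a hao
      have hp_in : E p (sa ap hapo) := hrest_mem ap hapo a u p hpf hkp haap
      have hC3 := (hstepP ap hapo).2.2.1 p a u hp_in hkp y hyu
      exact hta_sub ap hapo z (hC3.2 z hz)
  exact ⟨t3, ⟨notA_of_mem hA (ho_sub a0 ha0), htr3⟩, hx_sub,
    fun v hv => tv_lemma t3 φ hwit v hv⟩

end Urelements
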